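/- arXiv:2603.10530 — 5 statements merged into one kernel-verified Lean document; each statement's English description precedes it below -/
import Mathlib

section
/- Let U, V, W be real n×n matrices with U and W symmetric, so that H = [[U, V],[Vᵀ, W]] is a real symmetric 2n×2n matrix. Define the complex n×n matrices A = (U + W + √−1(V − Vᵀ))/4 and B = (U − W − √−1(V + Vᵀ))/4 (so A is Hermitian and B is symmetric). Then H is positive definite if and only if A is positive definite and A − B·(Ā)⁻¹·B̄ is positive definite, where Ā and B̄ denote entrywise complex conjugates. -/
open Complex Matrix
open scoped ComplexOrder

noncomputable section

/-- Wirtinger derivative `∂/∂z_j` of a complex-valued function on `ℂⁿ`. -/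
def wdz {n : ℕ} (f : (Fin n → ℂ) → ℂ) (j : Fin n) (z : Fin n → ℂ) : ℂ :=
  (fderiv ℝ f z (Pi.single j 1) - Complex.I * fderiv ℝ f z (Pi.single j Complex.I)) / 2

/-- Wirtinger derivative `∂/∂z̄_j` of a complex-valued function on `ℂⁿ`. -/
def wdzbar {n : ℕ} (f : (Fin n → ℂ) → ℂ) (j : Fin n) (z : Fin n → ℂ) : ℂ :=
  (fderiv ℝ f z (Pi.single j 1) + Complex.I * fderiv ℝ f z (Pi.single j Complex.I)) / 2

/-- A real-valued function on `ℂⁿ` viewed as complex-valued. -/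
def cplx {n : ℕ} (u : (Fin n → ℂ) → ℝ) : (Fin n → ℂ) → ℂ := fun z => (u z : ℂ)

/-- The complex Hessian `A = (u_{ij̄}) = (∂_i ∂_{j̄} u)`. -/
def hessA {n : ℕ} (u : (Fin n → ℂ) → ℝ) (z : Fin n → ℂ) : Matrix (Fin n) (Fin n) ℂ :=
  Matrix.of fun i j => wdz (wdzbar (cplx u) j) i z

/-- The matrix `B = (u_{ij}) = (∂_i ∂_j u)`. -/
def hessB {n : ℕ} (u : (Fin n → ℂ) → ℝ) (z : Fin n → ℂ) : Matrix (Fin n) (Fin n) ℂ :=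
  Matrix.of fun i j => wdz (wdz (cplx u) j) i z

/-- `u^{ij̄}`, the entries of the inverse of the complex Hessian, with the convention
`∑_j u^{ij̄} u_{kj̄} = δ_{ik}`. -/
def uInv {n : ℕ} (u : (Fin n → ℂ) → ℝ) (z : Fin n → ℂ) (i j : Fin n) : ℂ :=
  (hessA u z)⁻¹ j i

/-- Entrywise Wirtinger derivative `∂_i` of a matrix-valued function. -/
def mwdz {n : ℕ} (F : (Fin n → ℂ) → Matrix (Fin n) (Fin n) ℂ) (i : Fin n) (z : Fin n → ℂ) :
    Matrix (Fin n) (Fin n) ℂ :=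
  Matrix.of fun p q => wdz (fun w => F w p q) i z

/-- Entrywise Wirtinger derivative `∂_{j̄}` of a matrix-valued function. -/
def mwdzbar {n : ℕ} (F : (Fin n → ℂ) → Matrix (Fin n) (Fin n) ℂ) (j : Fin n) (z : Fin n → ℂ) :
    Matrix (Fin n) (Fin n) ℂ :=
  Matrix.of fun p q => wdzbar (fun w => F w p q) j z

/-- Entrywise complex conjugate of a matrix. -/
def mconj {n : ℕ} (M : Matrix (Fin n) (Fin n) ℂ) : Matrix (Fin n) (Fin n) ℂ :=
  M.map (starRingEnd ℂ)

/-- The real coordinate directions `x_1, …, x_n, y_1, …, y_n` of `ℂⁿ`. -/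
def realDir {n : ℕ} : (Fin n ⊕ Fin n) → (Fin n → ℂ)
  | Sum.inl j => Pi.single j 1
  | Sum.inr j => Pi.single j Complex.I

/-- The real Hessian of `u : ℂⁿ → ℝ` in the coordinates `(x_1,…,x_n,y_1,…,y_n)`. -/
def realHess {n : ℕ} (u : (Fin n → ℂ) → ℝ) (z : Fin n → ℂ) :
    Matrix (Fin n ⊕ Fin n) (Fin n ⊕ Fin n) ℝ :=
  Matrix.of fun a b => fderiv ℝ (fun w => fderiv ℝ u w (realDir b)) z (realDir a)

section AuxLemmas

variable {ι : Type*} [Fintype ι] [DecidableEq ι]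

lemma cast_dot (H : Matrix ι ι ℝ) (x y : ι → ℝ) :
    (fun i => ((x i : ℂ))) ⬝ᵥ ((H.map (fun r : ℝ => (r:ℂ))) *ᵥ (fun i => ((y i):ℂ)))
      = ((x ⬝ᵥ H *ᵥ y : ℝ) : ℂ) := by
  simp [dotProduct, mulVec, Matrix.map_apply, Finset.mul_sum]

lemma posDef_map_complex_iff {H : Matrix ι ι ℝ} (hH : H.IsSymm) :
    H.PosDef ↔ (H.map (fun r : ℝ => (r:ℂ))).PosDef := by
  have hherm : (H.map (fun r : ℝ => (r:ℂ))).IsHermitian := by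
    ext i j
    simp [Matrix.conjTranspose_apply, Matrix.map_apply, hH.apply]
  rw [posDef_iff_dotProduct_mulVec, posDef_iff_dotProduct_mulVec]
  constructor
  · rintro ⟨hs, hpos⟩
    refine ⟨hherm, fun v hv => ?_⟩
    set a : ι → ℝ := fun i => (v i).re with ha
    set b : ι → ℝ := fun i => (v i).im with hb
    have hva : v = (fun i => ((a i : ℂ))) + Complex.I • (fun i => ((b i : ℂ))) := by
      funext i; simp [ha, hb, Complex.ext_iff]
    have hvm : ∀ x : ι → ℝ, x ᵥ* H = H *ᵥ x := by
      intro x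
      conv_lhs => rw [← hH.eq]
      exact Matrix.vecMul_transpose ..
    have hcross : a ⬝ᵥ H *ᵥ b = b ⬝ᵥ H *ᵥ a := by
      rw [dotProduct_mulVec, hvm, dotProduct_comm]
    have key : star v ⬝ᵥ (H.map (fun r : ℝ => (r:ℂ))) *ᵥ v
        = (((a ⬝ᵥ H *ᵥ a) + (b ⬝ᵥ H *ᵥ b) : ℝ) : ℂ) := by
      have hsa : star (fun i => ((a i:ℂ))) = (fun i => ((a i:ℂ))) := by funext i; simp
      have hsb : star (fun i => ((b i:ℂ))) = (fun i => ((b i:ℂ))) := by funext i; simp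
      rw [hva]
      rw [star_add, star_smul]
      simp only [mulVec_add, mulVec_smul, add_dotProduct, smul_dotProduct,
        dotProduct_add, dotProduct_smul, hsa, hsb, cast_dot, hcross]
      simp only [smul_eq_mul, Complex.star_def, Complex.conj_I]
      push_cast
      ring_nf
      simp [Complex.I_sq]
    rw [key]
    have hab : a ≠ 0 ∨ b ≠ 0 := by
      by_contra h
      push_neg at h
      apply hv
      funext i
      have h1 := congrFun h.1 i
      have h2 := congrFun h.2 i
      simp [ha, hb] at h1 h2
      exact Complex.ext h1 h2
    have hA : 0 ≤ a ⬝ᵥ H *ᵥ a := by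
      rcases eq_or_ne a 0 with h | h
      · simp [h]
      · exact le_of_lt (hpos (x := a) h)
    have hB : 0 ≤ b ⬝ᵥ H *ᵥ b := by
      rcases eq_or_ne b 0 with h | h
      · simp [h]
      · exact le_of_lt (hpos (x := b) h)
    have hsum : 0 < a ⬝ᵥ H *ᵥ a + b ⬝ᵥ H *ᵥ b := by
      rcases hab with h | h
      · have := hpos (x := a) h; rw [star_trivial] at this; linarith
      · have := hpos (x := b) h; rw [star_trivial] at this; linarith
    exact_mod_cast hsum
  · rintro ⟨hs, hpos⟩
    have hHH : H.IsHermitian := hH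
    refine ⟨hHH, fun x hx => ?_⟩
    have hx' : (fun i => ((x i : ℂ))) ≠ 0 := by
      intro h
      apply hx
      funext i
      have := congrFun h i
      simpa using this
    have := hpos hx'
    have hst : star (fun i => ((x i : ℂ))) = (fun i => ((x i : ℂ))) := by
      funext i; simp
    rw [hst, cast_dot] at this
    exact_mod_cast this

lemma posDef_congr {M P : Matrix ι ι ℂ} (hM : M.PosDef) (hP : IsUnit P) :
    (Pᴴ * M * P).PosDef := by
  refine posDef_iff_dotProduct_mulVec.mpr ⟨?_, fun x hx => ?_⟩
  · have hherm := hM.isHermitian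
    unfold Matrix.IsHermitian
    rw [conjTranspose_mul, conjTranspose_mul, conjTranspose_conjTranspose, hherm.eq,
      Matrix.mul_assoc]
  · have hPx : P *ᵥ x ≠ 0 := by
      intro h
      exact hx (Matrix.mulVec_injective_iff_isUnit.mpr hP (by simpa using h : P *ᵥ x = P *ᵥ 0))
    have hpos := (posDef_iff_dotProduct_mulVec.mp hM).2 hPx
    rw [Matrix.mul_assoc, ← Matrix.mulVec_mulVec, ← Matrix.mulVec_mulVec,
      dotProduct_mulVec, ← star_mulVec]
    exact hpos

lemma posDef_congr_iff {M P : Matrix ι ι ℂ} (hP : IsUnit P) :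
    (Pᴴ * M * P).PosDef ↔ M.PosDef := by
  have hdet := (Matrix.isUnit_iff_isUnit_det P).mp hP
  constructor
  · intro h
    have hPinv : IsUnit (P⁻¹) := Matrix.isUnit_nonsing_inv_iff.mpr hP
    have hcong := posDef_congr h hPinv
    have hPP : (P⁻¹)ᴴ * (Pᴴ * M * P) * P⁻¹ = M := by
      rw [Matrix.conjTranspose_nonsing_inv]
      have e1 : (Pᴴ)⁻¹ * (Pᴴ * M * P) * P⁻¹ = ((Pᴴ)⁻¹ * Pᴴ) * M * (P * P⁻¹) := by
        simp only [Matrix.mul_assoc]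
      rw [e1, Matrix.nonsing_inv_mul _ (by rwa [Matrix.det_conjTranspose, isUnit_star]),
        Matrix.mul_nonsing_inv _ hdet, Matrix.one_mul, Matrix.mul_one]
    rwa [hPP] at hcong
  · exact fun h => posDef_congr h hP

lemma posDef_fromBlocks_iff {m l : Type*} [Fintype m] [DecidableEq m] [Fintype l] [DecidableEq l]
    {A : Matrix m m ℂ} (B : Matrix m l ℂ) (D : Matrix l l ℂ) :
    (Matrix.fromBlocks A B Bᴴ D).PosDef ↔ A.PosDef ∧ (D - Bᴴ * A⁻¹ * B).PosDef := by
  constructor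
  · intro h
    have hAherm : A.IsHermitian := by
      have := h.1
      rw [Matrix.isHermitian_fromBlocks_iff] at this
      exact this.1
    have hApos : A.PosDef := by
      refine posDef_iff_dotProduct_mulVec.mpr ⟨hAherm, fun x hx => ?_⟩
      have hne : (Sum.elim x (0 : l → ℂ)) ≠ 0 := by
        intro hcon
        exact hx (funext fun i => congrFun hcon (Sum.inl i))
      have := (posDef_iff_dotProduct_mulVec.mp h).2 hne
      simpa [Function.star_sumElim, Matrix.fromBlocks_mulVec,
        sumElim_dotProduct_sumElim] using this
    refine ⟨hApos, ?_⟩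
    haveI : Invertible A := hApos.isUnit.invertible
    have hSherm : (D - Bᴴ * A⁻¹ * B).IsHermitian :=
      (Matrix.IsHermitian.fromBlocks₁₁ B D hAherm).mp h.1
    refine posDef_iff_dotProduct_mulVec.mpr ⟨hSherm, fun y hy => ?_⟩
    set x : m → ℂ := -((A⁻¹ * B) *ᵥ y) with hxdef
    have hne : (Sum.elim x y) ≠ 0 := by
      intro hcon
      exact hy (funext fun i => congrFun hcon (Sum.inr i))
    have hq := (posDef_iff_dotProduct_mulVec.mp h).2 hne
    have heq := Matrix.schur_complement_eq₁₁ B D x y hAherm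
    rw [Matrix.dotProduct_mulVec] at hq
    rw [heq, hxdef, neg_add_cancel] at hq
    simpa [Matrix.dotProduct_mulVec] using hq
  · rintro ⟨hApos, hSpos⟩
    haveI : Invertible A := hApos.isUnit.invertible
    refine posDef_iff_dotProduct_mulVec.mpr ⟨(Matrix.IsHermitian.fromBlocks₁₁ B D hApos.1).mpr hSpos.1, fun v hv => ?_⟩
    set x : m → ℂ := v ∘ Sum.inl with hx
    set y : l → ℂ := v ∘ Sum.inr with hy
    have hv' : v = Sum.elim x y := (Sum.elim_comp_inl_inr v).symm
    have heq := Matrix.schur_complement_eq₁₁ B D x y hApos.1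
    rw [Matrix.dotProduct_mulVec, hv', heq]
    have h2 : 0 ≤ star y ⬝ᵥ (D - Bᴴ * A⁻¹ * B) *ᵥ y := hSpos.posSemidef.dotProduct_mulVec_nonneg y
    have h1 : 0 ≤ star (x + (A⁻¹ * B) *ᵥ y) ⬝ᵥ A *ᵥ (x + (A⁻¹ * B) *ᵥ y) :=
      hApos.posSemidef.dotProduct_mulVec_nonneg _
    rcases eq_or_ne y 0 with hy0 | hy0
    · have hx0 : x ≠ 0 := by
        intro hcon
        apply hv
        rw [hv', hcon, hy0]
        funext i
        cases i <;> rfl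
      have hw : x + (A⁻¹ * B) *ᵥ y ≠ 0 := by simpa [hy0] using hx0
      have := hApos.dotProduct_mulVec_pos hw
      rw [Matrix.dotProduct_mulVec] at this h2
      calc (0:ℂ) < _ := this
        _ ≤ _ := le_add_of_nonneg_right h2
    · have := hSpos.dotProduct_mulVec_pos hy0
      rw [Matrix.dotProduct_mulVec] at this h1
      calc (0:ℂ) < _ := this
        _ ≤ _ := le_add_of_nonneg_left h1

lemma posDef_map_conj_of {M : Matrix ι ι ℂ} (h : M.PosDef) :
    (M.map (starRingEnd ℂ)).PosDef := by
  have hMt : M.map (starRingEnd ℂ) = Mᵀ := by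
    ext i j
    have := congrFun (congrFun h.1.eq j) i
    simp only [Matrix.conjTranspose_apply] at this
    simp [Matrix.map_apply, Matrix.transpose_apply, ← this]
  rw [hMt]
  exact h.transpose

lemma posDef_map_conj_iff {M : Matrix ι ι ℂ} :
    (M.map (starRingEnd ℂ)).PosDef ↔ M.PosDef := by
  constructor
  · intro h
    have : (M.map (starRingEnd ℂ)).map (starRingEnd ℂ) = M := by
      ext i j; simp [Matrix.map_apply]
    rw [← this]
    exact posDef_map_conj_of h
  · exact posDef_map_conj_of

end AuxLemmas

theorem real_blocks_posdef_iff_complex (n : ℕ) (U V W : Matrix (Fin n) (Fin n) ℝ)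
    (hU : U.IsSymm) (hW : W.IsSymm) :
    let H : Matrix (Fin n ⊕ Fin n) (Fin n ⊕ Fin n) ℝ := Matrix.fromBlocks U V Vᵀ W
    let A : Matrix (Fin n) (Fin n) ℂ :=
      (4 : ℂ)⁻¹ • ((U + W).map (fun x => (x : ℂ)) + Complex.I • (V - Vᵀ).map (fun x => (x : ℂ)))
    let B : Matrix (Fin n) (Fin n) ℂ :=
      (4 : ℂ)⁻¹ • ((U - W).map (fun x => (x : ℂ)) - Complex.I • (V + Vᵀ).map (fun x => (x : ℂ)))
    (H.PosDef ↔ A.PosDef ∧ (A - B * (mconj A)⁻¹ * mconj B).PosDef) := by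
  intro H A B
  have hHsymm : H.IsSymm := by
    unfold Matrix.IsSymm
    rw [show H = Matrix.fromBlocks U V Vᵀ W from rfl, Matrix.fromBlocks_transpose,
      Matrix.transpose_transpose, hU.eq, hW.eq]
  set P : Matrix (Fin n ⊕ Fin n) (Fin n ⊕ Fin n) ℂ :=
    Matrix.fromBlocks ((2:ℂ)⁻¹ • 1) ((2:ℂ)⁻¹ • 1) ((Complex.I/2) • 1) (-(Complex.I/2) • 1)
      with hP
  set Q : Matrix (Fin n ⊕ Fin n) (Fin n ⊕ Fin n) ℂ :=
    Matrix.fromBlocks 1 (-Complex.I • 1) 1 (Complex.I • 1) with hQ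
  have hPQ : P * Q = 1 := by
    rw [hP, hQ, Matrix.fromBlocks_multiply]
    ext i j
    rcases i with i | i <;> rcases j with j | j <;>
      simp [Matrix.smul_mul, Matrix.mul_smul, smul_smul, Matrix.one_apply,
        Matrix.one_apply_ne, Complex.I_sq] <;>
      split <;> simp [Complex.ext_iff] <;> norm_num
  have hPunit : IsUnit P := by
    haveI := invertibleOfRightInverse _ _ hPQ
    exact isUnit_of_invertible P
  have hBsymT : Bᵀ = B := by
    ext i j
    show B j i = B i j
    simp only [B, Matrix.smul_apply, Matrix.sub_apply, Matrix.add_apply, Matrix.map_apply,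
      Matrix.transpose_apply, smul_eq_mul, Matrix.smul_apply]
    rw [hU.apply i j, hW.apply i j]
    push_cast
    ring
  have hAconjT : mconj A = Aᵀ := by
    ext i j
    simp only [mconj, A, Matrix.map_apply, Matrix.smul_apply, Matrix.add_apply,
      Matrix.sub_apply, Matrix.transpose_apply, smul_eq_mul, map_inv₀, map_add,
      map_ofNat, Complex.conj_ofReal, map_sub, Complex.conj_I, _root_.map_mul]
    rw [hU.apply i j, hW.apply i j]
    push_cast
    ring
  have key : Pᴴ * (H.map (fun x : ℝ => (x:ℂ))) * P = Matrix.fromBlocks A B Bᴴ (mconj A) := by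
    have hBH : Bᴴ = mconj B := by
      ext i j
      simp only [Matrix.conjTranspose_apply, mconj, Matrix.map_apply]
      exact congrArg _ (congrFun (congrFun hBsymT i) j)
    have hHcB : H.map (fun x : ℝ => (x:ℂ)) = Matrix.fromBlocks
        (U.map (fun x : ℝ => (x:ℂ))) (V.map (fun x : ℝ => (x:ℂ)))
        (Vᵀ.map (fun x : ℝ => (x:ℂ))) (W.map (fun x : ℝ => (x:ℂ))) :=
      Matrix.fromBlocks_map _ _ _ _ _
    rw [hHcB, hP, hBH, Matrix.fromBlocks_conjTranspose, Matrix.fromBlocks_multiply,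
      Matrix.fromBlocks_multiply]
    refine Matrix.fromBlocks_inj.mpr ⟨?_, ?_, ?_, ?_⟩ <;> ext i j <;>
      simp only [Matrix.conjTranspose_smul, Matrix.conjTranspose_one, Matrix.smul_mul,
        Matrix.mul_smul, Matrix.one_mul, Matrix.mul_one, mconj, A, B,
        Matrix.smul_apply, Matrix.add_apply, Matrix.sub_apply, Matrix.map_apply,
        Matrix.transpose_apply, Matrix.neg_apply, smul_eq_mul,
        star_smul, star_one, Complex.star_def, map_inv₀, Complex.conj_I, map_div₀,
        map_ofNat, Complex.conj_ofReal, map_neg, _root_.map_mul, map_add, map_sub, neg_neg] <;>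
      simp [Complex.ext_iff] <;> first | tauto | exact ⟨by ring, by ring⟩ | ring
  have hAherm : Aᴴ = A := by
    ext i j
    have := congrFun (congrFun hAconjT j) i
    simpa [mconj, Matrix.map_apply, Matrix.conjTranspose_apply,
      Matrix.transpose_apply] using this
  have hconjeq : (mconj A - Bᴴ * A⁻¹ * B).map (starRingEnd ℂ)
      = A - B * (mconj A)⁻¹ * mconj B := by
    have hfm : ∀ M : Matrix (Fin n) (Fin n) ℂ,
        M.map (starRingEnd ℂ) = (starRingEnd ℂ).mapMatrix M := fun _ => rfl
    rw [hfm, map_sub, _root_.map_mul, _root_.map_mul]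
    have h1 : (starRingEnd ℂ).mapMatrix (mconj A) = A := by
      ext i j
      simp [mconj, Matrix.map_apply, RingHom.mapMatrix_apply]
    have h2 : (starRingEnd ℂ).mapMatrix Bᴴ = B := by
      ext i j
      simp only [RingHom.mapMatrix_apply, Matrix.map_apply, Matrix.conjTranspose_apply,
        RingHomCompTriple.comp_apply, Complex.star_def, Complex.conj_conj]
      exact congrFun (congrFun hBsymT i) j
    have h3 : (starRingEnd ℂ).mapMatrix A⁻¹ = (mconj A)⁻¹ := by
      rw [RingHom.mapMatrix_apply]
      have hh : A⁻¹.map (starRingEnd ℂ) = ((A⁻¹)ᴴ)ᵀ := by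
        ext i j
        simp [Matrix.conjTranspose_apply, Matrix.map_apply]
      rw [hh, Matrix.conjTranspose_nonsing_inv, hAherm, Matrix.transpose_nonsing_inv, ← hAconjT]
    have h4 : (starRingEnd ℂ).mapMatrix B = mconj B := rfl
    rw [h1, h2, h3, h4]
  rw [posDef_map_complex_iff hHsymm,
    ← posDef_congr_iff (M := H.map (fun x : ℝ => (x:ℂ))) hPunit, key, posDef_fromBlocks_iff]
  refine and_congr_right fun hA => ?_
  rw [← posDef_map_conj_iff (M := mconj A - Bᴴ * A⁻¹ * B), hconjeq]

end
end

section
/- Let u be a C² function on ℂ^n, let H be its real Hessian at a point p in the coordinates (x_1,…,x_n,y_1,…,y_n), and let A = (u_{ij̄}(p)) and B = (u_{ij}(p)) be its complex Hessians at p. Then H is positive definite if and only if A is positive definite and A − B·(Ā)⁻¹·B̄ is positive definite. -/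
open Complex Matrix
open scoped ComplexOrder

noncomputable section

section Analysis
variable {n : ℕ}

lemma fderiv_cplx (u : (Fin n → ℂ) → ℝ) (hu : ContDiff ℝ 2 u) (w v : Fin n → ℂ) :
    fderiv ℝ (cplx u) w v = (fderiv ℝ u w v : ℂ) := by
  have h : HasFDerivAt (cplx u) (Complex.ofRealCLM.comp (fderiv ℝ u w)) w :=
    Complex.ofRealCLM.hasFDerivAt.comp w ((hu.differentiable (by norm_num) w).hasFDerivAt)
  rw [h.fderiv]; rfl

lemma hasFDerivAt_fderiv_apply (u : (Fin n → ℂ) → ℝ) (hu : ContDiff ℝ 2 u) (p : Fin n → ℂ) (b : Fin n → ℂ) :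
    HasFDerivAt (fun w => fderiv ℝ u w b)
      ((ContinuousLinearMap.apply ℝ ℝ b).comp (fderiv ℝ (fderiv ℝ u) p)) p := by
  have h1 : DifferentiableAt ℝ (fderiv ℝ u) p :=
    ((hu.fderiv_right (m := 1) (by norm_num)).differentiable (by norm_num)) p
  exact (ContinuousLinearMap.apply ℝ ℝ b).hasFDerivAt.comp p h1.hasFDerivAt

lemma fderiv_combo (p : Fin n → ℂ) (g₁ g₂ : (Fin n → ℂ) → ℝ) (L₁ L₂ : (Fin n → ℂ) →L[ℝ] ℝ)
    (c : ℂ) (h₁ : HasFDerivAt g₁ L₁ p) (h₂ : HasFDerivAt g₂ L₂ p) (v : Fin n → ℂ) :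
    fderiv ℝ (fun w => ((g₁ w : ℂ) + c * (g₂ w : ℂ)) / 2) p v
      = ((L₁ v : ℂ) + c * (L₂ v : ℂ)) / 2 := by
  have H : HasFDerivAt (fun w => ((g₁ w : ℂ) + c * (g₂ w : ℂ)) / 2)
      ((2:ℂ)⁻¹ • (Complex.ofRealCLM.comp L₁ + c • Complex.ofRealCLM.comp L₂)) p := by
    simp only [div_eq_inv_mul]
    exact ((Complex.ofRealCLM.hasFDerivAt.comp p h₁).add
      ((Complex.ofRealCLM.hasFDerivAt.comp p h₂).const_mul c)).const_mul ((2:ℂ)⁻¹)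
  rw [H.fderiv]
  simp [div_eq_inv_mul]
  ring

lemma realHess_apply (u : (Fin n → ℂ) → ℝ) (hu : ContDiff ℝ 2 u) (p : Fin n → ℂ) (a b : Fin n ⊕ Fin n) :
    realHess u p a b = fderiv ℝ (fderiv ℝ u) p (realDir a) (realDir b) := by
  show fderiv ℝ (fun w => fderiv ℝ u w (realDir b)) p (realDir a) = _
  rw [(hasFDerivAt_fderiv_apply u hu p (realDir b)).fderiv]
  rfl

lemma hessA_apply (u : (Fin n → ℂ) → ℝ) (hu : ContDiff ℝ 2 u) (p : Fin n → ℂ) (i j : Fin n) :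
    hessA u p i j = ((realHess u p (.inl i) (.inl j) : ℂ) + (realHess u p (.inr i) (.inr j) : ℂ)
      + Complex.I * ((realHess u p (.inl i) (.inr j) : ℂ)
        - (realHess u p (.inr i) (.inl j) : ℂ))) / 4 := by
  have hbar : wdzbar (cplx u) j = fun w =>
      ((fderiv ℝ u w (Pi.single j 1) : ℂ) + Complex.I * (fderiv ℝ u w (Pi.single j I) : ℂ)) / 2 := by
    funext w
    rw [wdzbar, fderiv_cplx u hu, fderiv_cplx u hu]
  show wdz (wdzbar (cplx u) j) i p = _
  rw [wdz, hbar,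
    fderiv_combo p _ _ _ _ Complex.I (hasFDerivAt_fderiv_apply u hu p _)
      (hasFDerivAt_fderiv_apply u hu p _),
    fderiv_combo p _ _ _ _ Complex.I (hasFDerivAt_fderiv_apply u hu p _)
      (hasFDerivAt_fderiv_apply u hu p _),
    realHess_apply u hu, realHess_apply u hu, realHess_apply u hu, realHess_apply u hu]
  show ((((fderiv ℝ (fderiv ℝ u) p (Pi.single i 1)) (Pi.single j 1) : ℂ) + _) / 2 - _) / 2 = _
  simp only [ContinuousLinearMap.comp_apply, ContinuousLinearMap.apply_apply, realDir]
  ring_nf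
  rw [Complex.I_sq]
  ring

lemma hessB_apply (u : (Fin n → ℂ) → ℝ) (hu : ContDiff ℝ 2 u) (p : Fin n → ℂ) (i j : Fin n) :
    hessB u p i j = ((realHess u p (.inl i) (.inl j) : ℂ) - (realHess u p (.inr i) (.inr j) : ℂ)
      - Complex.I * ((realHess u p (.inl i) (.inr j) : ℂ)
        + (realHess u p (.inr i) (.inl j) : ℂ))) / 4 := by
  have hbar : wdz (cplx u) j = fun w =>
      ((fderiv ℝ u w (Pi.single j 1) : ℂ) + (-Complex.I) * (fderiv ℝ u w (Pi.single j I) : ℂ)) / 2 := by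
    funext w
    rw [wdz, fderiv_cplx u hu, fderiv_cplx u hu]
    ring
  show wdz (wdz (cplx u) j) i p = _
  rw [wdz, hbar,
    fderiv_combo p _ _ _ _ (-Complex.I) (hasFDerivAt_fderiv_apply u hu p _)
      (hasFDerivAt_fderiv_apply u hu p _),
    fderiv_combo p _ _ _ _ (-Complex.I) (hasFDerivAt_fderiv_apply u hu p _)
      (hasFDerivAt_fderiv_apply u hu p _),
    realHess_apply u hu, realHess_apply u hu, realHess_apply u hu, realHess_apply u hu]
  simp only [ContinuousLinearMap.comp_apply, ContinuousLinearMap.apply_apply, realDir]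
  ring_nf
  rw [Complex.I_sq]
  ring

lemma realHess_isSymm (u : (Fin n → ℂ) → ℝ) (hu : ContDiff ℝ 2 u) (p : Fin n → ℂ) : (realHess u p).IsSymm := by
  have h := (hu.contDiffAt (x := p)).isSymmSndFDerivAt (n := 2) (by norm_num)
  ext a b
  rw [Matrix.transpose_apply, realHess_apply u hu, realHess_apply u hu]
  exact h.eq _ _

end Analysis

lemma quad_map {m : Type*} [Fintype m] (R : Matrix m m ℝ) (hR : R.IsSymm) (x : m → ℂ) :
    star x ⬝ᵥ ((R.map (Complex.ofReal)) *ᵥ x) =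
      (((fun k => (x k).re) ⬝ᵥ R *ᵥ (fun k => (x k).re)
        + (fun k => (x k).im) ⬝ᵥ R *ᵥ (fun k => (x k).im) : ℝ) : ℂ) := by
  classical
  simp only [dotProduct, mulVec, Matrix.map_apply, Pi.star_apply, Finset.mul_sum]
  apply Complex.ext
  · simp only [Complex.re_sum, Complex.ofReal_re, Complex.mul_re, Complex.mul_im,
      Complex.ofReal_im, RCLike.star_def, Complex.conj_re, Complex.conj_im]
    rw [← Finset.sum_add_distrib]
    refine Finset.sum_congr rfl fun k _ => ?_
    rw [← Finset.sum_add_distrib]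
    refine Finset.sum_congr rfl fun l _ => ?_
    ring
  · simp only [Complex.im_sum, Complex.ofReal_im, Complex.mul_re, Complex.mul_im,
      Complex.ofReal_re, RCLike.star_def, Complex.conj_re, Complex.conj_im]
    have step : (∑ k, ∑ l, ((x k).re * (R k l * (x l).im + 0 * (x l).re) +
        -(x k).im * (R k l * (x l).re - 0 * (x l).im)))
        = ∑ k, ∑ l, (R k l * ((x k).re * (x l).im)) -
            ∑ k, ∑ l, (R k l * ((x k).im * (x l).re)) := by
      rw [← Finset.sum_sub_distrib]
      refine Finset.sum_congr rfl fun k _ => ?_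
      rw [← Finset.sum_sub_distrib]
      refine Finset.sum_congr rfl fun l _ => by ring
    rw [step, sub_eq_zero, Finset.sum_comm]
    refine Finset.sum_congr rfl fun k _ => Finset.sum_congr rfl fun l _ => ?_
    rw [hR.apply k l]
    ring

lemma isHermitian_map_ofReal {m : Type*} [Fintype m] (R : Matrix m m ℝ) (hR : R.IsSymm) :
    (R.map (Complex.ofReal)).IsHermitian := by
  ext i j
  simp only [Matrix.conjTranspose_apply, Matrix.map_apply, RCLike.star_def,
    Complex.conj_ofReal, hR.apply i j]

lemma posDef_map_iff {m : Type*} [Fintype m] [DecidableEq m] (R : Matrix m m ℝ)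
    (hR : R.IsSymm) : (R.map (Complex.ofReal)).PosDef ↔ R.PosDef := by
  constructor
  · intro h
    refine Matrix.PosDef.of_dotProduct_mulVec_pos (by ext i j; exact hR.apply i j) fun y hy => ?_
    have hx : (fun k => (y k : ℂ)) ≠ 0 := by
      intro hc
      exact hy (funext fun k => by
        simpa using congrFun hc k)
    have := h.dotProduct_mulVec_pos hx
    rw [quad_map R hR] at this
    simp only [Complex.ofReal_re, Complex.ofReal_im] at this
    have h0 : (fun k => (0:ℝ)) ⬝ᵥ R *ᵥ (fun k => (0:ℝ)) = 0 := by
      simp [dotProduct]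
    rw [Complex.zero_lt_real] at this
    simpa [h0, star_trivial] using this
  · intro h
    refine Matrix.PosDef.of_dotProduct_mulVec_pos (isHermitian_map_ofReal R hR) fun x hx => ?_
    rw [quad_map R hR x, Complex.zero_lt_real]
    set a : m → ℝ := fun k => (x k).re with ha
    set b : m → ℝ := fun k => (x k).im with hb
    have hab : a ≠ 0 ∨ b ≠ 0 := by
      by_contra hc
      push_neg at hc
      apply hx
      funext k
      have h1 := congrFun hc.1 k
      have h2 := congrFun hc.2 k
      simp only [ha, hb, Pi.zero_apply] at h1 h2
      exact Complex.ext h1 h2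
    have hsa : ∀ v : m → ℝ, star v ⬝ᵥ R *ᵥ v = v ⬝ᵥ R *ᵥ v := fun v => by
      simp [star_trivial]
    rcases hab with hab | hab
    · have h1 : 0 < a ⬝ᵥ R *ᵥ a := by have := h.dotProduct_mulVec_pos hab; rwa [hsa] at this
      have h2 : 0 ≤ b ⬝ᵥ R *ᵥ b := by have := h.posSemidef.dotProduct_mulVec_nonneg b; rwa [hsa] at this
      linarith
    · have h1 : 0 ≤ a ⬝ᵥ R *ᵥ a := by have := h.posSemidef.dotProduct_mulVec_nonneg a; rwa [hsa] at this
      have h2 : 0 < b ⬝ᵥ R *ᵥ b := by have := h.dotProduct_mulVec_pos hab; rwa [hsa] at this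
      linarith

lemma posDef_conj {m : Type*} [Fintype m] [DecidableEq m] {M : Matrix m m ℂ}
    (h : M.PosDef) (T : Matrix m m ℂ) [Invertible T] : (T * M * Tᴴ).PosDef := by
  refine Matrix.PosDef.of_dotProduct_mulVec_pos (by simpa [Matrix.mul_assoc] using Matrix.isHermitian_mul_mul_conjTranspose T h.1)
    fun x hx => ?_
  have key : star x ⬝ᵥ ((T * M * Tᴴ) *ᵥ x) = star (Tᴴ *ᵥ x) ⬝ᵥ (M *ᵥ (Tᴴ *ᵥ x)) := by
    rw [← Matrix.mulVec_mulVec, ← Matrix.mulVec_mulVec, Matrix.dotProduct_mulVec,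
      Matrix.star_mulVec, Matrix.conjTranspose_conjTranspose]
  rw [key]
  exact h.dotProduct_mulVec_pos (x := Tᴴ *ᵥ x) fun hc => hx (by
    have := Matrix.mulVec_injective_of_invertible Tᴴ
    have h0 : Tᴴ *ᵥ x = Tᴴ *ᵥ 0 := by simpa [Matrix.mulVec_zero] using hc
    exact this h0)

lemma posDef_conj_iff {m : Type*} [Fintype m] [DecidableEq m] (M T : Matrix m m ℂ)
    [Invertible T] : (T * M * Tᴴ).PosDef ↔ M.PosDef := by
  constructor
  · intro h
    have h2 := posDef_conj h (⅟T)
    have : ⅟T * (T * M * Tᴴ) * (⅟T)ᴴ = M := by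
      rw [Matrix.conjTranspose_invOf]
      calc ⅟T * (T * M * Tᴴ) * ⅟(Tᴴ) = (⅟T * T) * M * (Tᴴ * ⅟(Tᴴ)) := by
            noncomm_ring
        _ = M := by rw [invOf_mul_self, mul_invOf_self, Matrix.one_mul, Matrix.mul_one]
    rwa [this] at h2
  · exact fun h => posDef_conj h T

lemma smul_pos_iff_complex (c : ℝ) (hc : 0 < c) (q : ℂ) : 0 < (c : ℂ) * q ↔ 0 < q := by
  simp only [Complex.lt_def, Complex.mul_re, Complex.mul_im, Complex.ofReal_re,
    Complex.ofReal_im, Complex.zero_re, Complex.zero_im, zero_mul, sub_zero, mul_zero, zero_add]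
  constructor
  · rintro ⟨h1, h2⟩
    refine ⟨by nlinarith, ?_⟩
    have h2' : c * q.im = 0 := by linarith [h2.symm]
    exact ((mul_eq_zero.1 h2').resolve_left hc.ne').symm
  · rintro ⟨h1, h2⟩
    exact ⟨by nlinarith, by rw [← h2]; ring⟩

lemma posDef_smul_iff {m : Type*} [Fintype m] (c : ℝ) (hc : 0 < c) (M : Matrix m m ℂ) :
    ((c : ℂ) • M).PosDef ↔ M.PosDef := by
  have hcne : (c : ℂ) ≠ 0 := by exact_mod_cast hc.ne'
  have herm : ((c : ℂ) • M).IsHermitian ↔ M.IsHermitian := by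
    constructor <;> intro h <;> ext i j <;>
      have hij := congrFun (congrFun h.eq i) j <;>
      simp only [Matrix.conjTranspose_apply, Matrix.smul_apply, smul_eq_mul, RCLike.star_def,
        _root_.map_mul, Complex.conj_ofReal] at hij ⊢
    · exact mul_left_cancel₀ hcne hij
    · rw [hij]
  constructor <;> intro h
  · refine Matrix.PosDef.of_dotProduct_mulVec_pos (herm.mp h.1) fun x hx => ?_
    have := h.dotProduct_mulVec_pos hx
    rw [Matrix.smul_mulVec, dotProduct_smul, smul_eq_mul,
      smul_pos_iff_complex c hc] at this
    exact this
  · refine Matrix.PosDef.of_dotProduct_mulVec_pos (herm.mpr h.1) fun x hx => ?_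
    rw [Matrix.smul_mulVec, dotProduct_smul, smul_eq_mul,
      smul_pos_iff_complex c hc]
    exact h.dotProduct_mulVec_pos hx

lemma posDef_of_posSemidef_isUnit {m : Type*} [Fintype m] [DecidableEq m]
    {M : Matrix m m ℂ} (h : M.PosSemidef) (hdet : IsUnit M.det) : M.PosDef := by
  refine Matrix.PosDef.of_dotProduct_mulVec_pos h.1 fun x hx => ?_
  refine lt_of_le_of_ne (h.dotProduct_mulVec_nonneg x) fun hq => ?_
  have hM0 : M *ᵥ x = 0 := (h.dotProduct_mulVec_zero_iff x).1 hq.symm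
  have hinj := Matrix.mulVec_injective_iff_isUnit.2 ((Matrix.isUnit_iff_isUnit_det M).2 hdet)
  exact hx (hinj (by simpa [Matrix.mulVec_zero] using hM0))

lemma posDef_corner₁₁ {m l : Type*} [Fintype m] [Fintype l] [DecidableEq m] [DecidableEq l]
    {A : Matrix m m ℂ} {B : Matrix m l ℂ} {C : Matrix l m ℂ} {D : Matrix l l ℂ}
    (h : (Matrix.fromBlocks A B C D).PosDef) : A.PosDef := by
  refine Matrix.PosDef.of_dotProduct_mulVec_pos ?_ ?_
  · ext i j
    have := congrFun (congrFun h.1 (Sum.inl i)) (Sum.inl j)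
    simpa [Matrix.conjTranspose_apply] using this
  · intro x hx
    have hx' : (Sum.elim x (0 : l → ℂ)) ≠ 0 := fun hc => hx (funext fun i => congrFun hc (Sum.inl i))
    have key := h.dotProduct_mulVec_pos hx'
    have hstar : star (Sum.elim x (0 : l → ℂ)) = Sum.elim (star x) 0 := by
      funext k; cases k <;> simp
    rw [Matrix.fromBlocks_mulVec, hstar, Matrix.dotProduct_block] at key
    simpa using key

lemma schur_iff {m : Type*} [Fintype m] [DecidableEq m] (A B D : Matrix m m ℂ)
    (himp : A.PosDef → D.PosDef) :
    (Matrix.fromBlocks A B Bᴴ D).PosDef ↔ A.PosDef ∧ (A - B * D⁻¹ * Bᴴ).PosDef := by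
  constructor
  · intro h
    have hA : A.PosDef := posDef_corner₁₁ h
    have hD := himp hA
    have : Invertible D := hD.isUnit.invertible
    have hsemi := (Matrix.PosDef.fromBlocks₂₂ A B hD).1 h.posSemidef
    have hdetM := h.det_pos
    rw [Matrix.det_fromBlocks₂₂, Matrix.invOf_eq_nonsing_inv] at hdetM
    have hSdet : (A - B * D⁻¹ * Bᴴ).det ≠ 0 := by
      intro h0
      rw [h0, mul_zero] at hdetM
      exact lt_irrefl _ hdetM
    exact ⟨hA, posDef_of_posSemidef_isUnit hsemi hSdet.isUnit⟩
  · rintro ⟨hA, hS⟩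
    have hD := himp hA
    have : Invertible D := hD.isUnit.invertible
    refine posDef_of_posSemidef_isUnit ((Matrix.PosDef.fromBlocks₂₂ A B hD).2 hS.posSemidef) ?_
    rw [Matrix.det_fromBlocks₂₂, Matrix.invOf_eq_nonsing_inv]
    exact (hD.det_pos.ne'.isUnit).mul hS.det_pos.ne'.isUnit

theorem real_hessian_posdef_iff_complex (n : ℕ) (u : (Fin n → ℂ) → ℝ)
    (hu : ContDiff ℝ 2 u) (p : Fin n → ℂ) :
    (realHess u p).PosDef ↔ (hessA u p).PosDef ∧
      (hessA u p - hessB u p * (mconj (hessA u p))⁻¹ * mconj (hessB u p)).PosDef := by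
  classical
  set A := hessA u p with hAdef
  set B := hessB u p with hBdef
  set R := realHess u p with hRdef
  have hsym : R.IsSymm := realHess_isSymm u hu p
  set P : Matrix (Fin n) (Fin n) ℂ := Matrix.of (fun i j => (R (Sum.inl i) (Sum.inl j) : ℂ)) with hP
  set Q : Matrix (Fin n) (Fin n) ℂ := Matrix.of (fun i j => (R (Sum.inl i) (Sum.inr j) : ℂ)) with hQ
  set Q' : Matrix (Fin n) (Fin n) ℂ := Matrix.of (fun i j => (R (Sum.inr i) (Sum.inl j) : ℂ)) with hQ'
  set S : Matrix (Fin n) (Fin n) ℂ := Matrix.of (fun i j => (R (Sum.inr i) (Sum.inr j) : ℂ)) with hS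
  have hHc : R.map (Complex.ofReal) = Matrix.fromBlocks P Q Q' S := by
    ext (i|i) (j|j) <;> rfl
  -- entry formulas
  have hAe : ∀ i j, A i j = (P i j + S i j + Complex.I * (Q i j - Q' i j)) / 4 := fun i j =>
    hessA_apply u hu p i j
  have hBe : ∀ i j, B i j = (P i j - S i j - Complex.I * (Q i j + Q' i j)) / 4 := fun i j =>
    hessB_apply u hu p i j
  have hPs : ∀ i j, P j i = P i j := fun i j => by
    simp only [hP, Matrix.of_apply]; rw [hsym.apply (Sum.inl i) (Sum.inl j)]
  have hSs : ∀ i j, S j i = S i j := fun i j => by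
    simp only [hS, Matrix.of_apply]; rw [hsym.apply (Sum.inr i) (Sum.inr j)]
  have hQs : ∀ i j, Q j i = Q' i j := fun i j => by
    simp only [hQ, hQ', Matrix.of_apply]; rw [hsym.apply (Sum.inr i) (Sum.inl j)]
  set T : Matrix (Fin n ⊕ Fin n) (Fin n ⊕ Fin n) ℂ :=
    Matrix.fromBlocks 1 ((-Complex.I) • 1) 1 (Complex.I • 1) with hT
  have hTH : Tᴴ = Matrix.fromBlocks 1 1 (Complex.I • 1) ((-Complex.I) • 1) := by
    rw [hT, Matrix.fromBlocks_conjTranspose]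
    simp [Matrix.conjTranspose_smul]
  have hTTH : T * Tᴴ = (2:ℂ) • 1 := by
    rw [hT, hTH, Matrix.fromBlocks_multiply]
    have h1 : (2:ℂ) • (1 : Matrix (Fin n ⊕ Fin n) (Fin n ⊕ Fin n) ℂ) =
        Matrix.fromBlocks ((2:ℂ) • 1) 0 0 ((2:ℂ) • 1) := by
      rw [← Matrix.fromBlocks_one, Matrix.fromBlocks_smul]
      simp
    rw [h1]
    refine Matrix.fromBlocks_inj.2 ⟨?_, ?_, ?_, ?_⟩ <;>
      simp [Matrix.smul_mul, Matrix.mul_smul, smul_smul, Complex.I_mul_I, two_smul]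
  haveI : Invertible T := invertibleOfRightInverse _ ((2:ℂ)⁻¹ • Tᴴ) (by
    rw [Matrix.mul_smul, hTTH, smul_smul, inv_mul_cancel₀ (two_ne_zero), one_smul])
  have hfact : T * (R.map Complex.ofReal) * Tᴴ = ((4:ℝ):ℂ) • Matrix.fromBlocks A B Bᴴ (mconj A) := by
    rw [hHc, hT, hTH, Matrix.fromBlocks_multiply, Matrix.fromBlocks_multiply,
      Matrix.fromBlocks_smul]
    refine Matrix.fromBlocks_inj.2 ⟨?_, ?_, ?_, ?_⟩ <;>
      ext i j <;>
      simp only [Matrix.one_mul, Matrix.mul_one, Matrix.smul_mul, Matrix.mul_smul, smul_smul,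
        Matrix.add_apply, Matrix.smul_apply, Matrix.conjTranspose_apply, Matrix.map_apply,
        mconj, smul_eq_mul, Complex.ofReal_ofNat]
    · rw [hAe i j]; ring_nf; rw [Complex.I_sq]; ring
    · rw [hBe i j]; ring_nf; rw [Complex.I_sq]; ring
    · rw [hBe j i]
      simp only [hP, hQ, hQ', hS, Matrix.of_apply, RCLike.star_def, map_div₀, map_sub,
        map_add, _root_.map_mul, map_ofNat, Complex.conj_I, Complex.conj_ofReal, Complex.ofReal_sub,
        Complex.ofReal_add]
      rw [hsym.apply (Sum.inl i) (Sum.inl j), hsym.apply (Sum.inr i) (Sum.inr j),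
        hsym.apply (Sum.inr i) (Sum.inl j), hsym.apply (Sum.inl i) (Sum.inr j)]
      ring_nf
      rw [Complex.I_sq]
      ring
    · rw [hAe i j]
      simp only [map_div₀, map_add, map_sub, _root_.map_mul, map_ofNat, Complex.conj_I]
      have c1 : (starRingEnd ℂ) (P i j) = P i j := by
        simp [hP, Complex.conj_ofReal]
      have c2 : (starRingEnd ℂ) (S i j) = S i j := by
        simp [hS, Complex.conj_ofReal]
      have c3 : (starRingEnd ℂ) (Q i j) = Q i j := by
        simp [hQ, Complex.conj_ofReal]
      have c4 : (starRingEnd ℂ) (Q' i j) = Q' i j := by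
        simp [hQ', Complex.conj_ofReal]
      rw [c1, c2, c3, c4]
      ring_nf
      rw [Complex.I_sq]
      ring
  have himp : A.PosDef → (mconj A).PosDef := by
    intro hA
    have : mconj A = Aᵀ := by
      ext i j
      have := congrFun (congrFun hA.1 j) i
      simp only [Matrix.conjTranspose_apply] at this
      simp only [mconj, Matrix.map_apply, Matrix.transpose_apply]
      rw [← this]
      rfl
    rw [this]
    exact hA.transpose
  have hBH : mconj B = Bᴴ := by
    ext i j
    have hBsymm : B j i = B i j := by
      rw [hBe i j, hBe j i, hPs i j, hSs i j]
      have := hQs i j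
      have h2 := hQs j i
      rw [this, ← h2]
      ring
    simp only [mconj, Matrix.map_apply, Matrix.conjTranspose_apply, RCLike.star_def, hBsymm]
  rw [hRdef, ← posDef_map_iff R hsym, ← posDef_conj_iff (R.map Complex.ofReal) T, hfact,
    posDef_smul_iff (4:ℝ) (by norm_num), schur_iff A B (mconj A) himp, hBH]

end
end

section
/- Let u be a smooth strictly plurisubharmonic function on an open set Ω ⊆ ℂ^n satisfying det(u_{ij̄}) = e^{(n+1)u} on Ω, and set A = (u_{ij̄}), B = (u_{ij}). Then, as an identity of n×n matrix-valued functions on Ω, u^{ij̄} ∂_i∂_{j̄} A = u^{ij̄} (∂_{j̄} B)·(Ā)⁻¹·(∂_i B̄) + (n+1)A (summation over i, j). -/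
open Complex Matrix
open scoped ComplexOrder

noncomputable section

namespace MA

variable {n : ℕ} {Ω : Set (Fin n → ℂ)} {z : Fin n → ℂ}
variable {f g : (Fin n → ℂ) → ℂ} {c : ℂ} {j p q : Fin n}

/-- Generalized Wirtinger derivative: `wg (-I)` is `∂`, `wg I` is `∂̄`. -/
def wg (c : ℂ) (f : (Fin n → ℂ) → ℂ) (j : Fin n) (z : Fin n → ℂ) : ℂ :=
  (fderiv ℝ f z (Pi.single j 1) + c * fderiv ℝ f z (Pi.single j Complex.I)) / 2

lemma sm_diffAt (hΩ : IsOpen Ω) (hf : ContDiffOn ℝ (⊤ : ℕ∞) f Ω) (hz : z ∈ Ω) :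
    DifferentiableAt ℝ f z :=
  (hf.contDiffAt (hΩ.mem_nhds hz)).differentiableAt (by simp)

lemma contDiffOn_fderiv_apply (hΩ : IsOpen Ω) (hf : ContDiffOn ℝ (⊤ : ℕ∞) f Ω)
    (v : Fin n → ℂ) : ContDiffOn ℝ (⊤ : ℕ∞) (fun z => fderiv ℝ f z v) Ω :=
  (hf.fderiv_of_isOpen hΩ (by simp)).clm_apply contDiffOn_const

lemma contDiffOn_wg (hΩ : IsOpen Ω) (hf : ContDiffOn ℝ (⊤ : ℕ∞) f Ω) :
    ContDiffOn ℝ (⊤ : ℕ∞) (wg c f j) Ω := by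
  unfold wg
  exact ((contDiffOn_fderiv_apply hΩ hf _).add
    (contDiffOn_const.mul (contDiffOn_fderiv_apply hΩ hf _))).div_const 2

lemma wg_congr (hΩ : IsOpen Ω) (h : Set.EqOn f g Ω) (hz : z ∈ Ω) :
    wg c f j z = wg c g j z := by
  have : fderiv ℝ f z = fderiv ℝ g z :=
    Filter.EventuallyEq.fderiv_eq (Filter.eventuallyEq_of_mem (hΩ.mem_nhds hz) h)
  simp [wg, this]

lemma wg_const (a : ℂ) : wg c (fun _ => a) j z = 0 := by simp [wg]

lemma wg_add (hf : DifferentiableAt ℝ f z) (hg : DifferentiableAt ℝ g z) :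
    wg c (fun w => f w + g w) j z = wg c f j z + wg c g j z := by
  simp only [wg, fderiv_fun_add hf hg, ContinuousLinearMap.add_apply]
  ring

lemma wg_mul (hf : DifferentiableAt ℝ f z) (hg : DifferentiableAt ℝ g z) :
    wg c (fun w => f w * g w) j z = wg c f j z * g z + f z * wg c g j z := by
  simp only [wg, fderiv_fun_mul hf hg, ContinuousLinearMap.add_apply,
    ContinuousLinearMap.smul_apply, smul_eq_mul]
  ring

lemma wg_const_mul (hf : DifferentiableAt ℝ f z) (a : ℂ) :
    wg c (fun w => a * f w) j z = a * wg c f j z := by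
  simp only [wg, fderiv_const_mul hf a, ContinuousLinearMap.smul_apply, smul_eq_mul]
  ring

lemma wg_sum {ι : Type*} {s : Finset ι} {F : ι → (Fin n → ℂ) → ℂ}
    (hF : ∀ i ∈ s, DifferentiableAt ℝ (F i) z) :
    wg c (fun w => ∑ i ∈ s, F i w) j z = ∑ i ∈ s, wg c (F i) j z := by
  simp only [wg, fderiv_fun_sum hF, ContinuousLinearMap.sum_apply]
  rw [Finset.mul_sum, ← Finset.sum_add_distrib, Finset.sum_div]

lemma wg_prod {ι : Type*} [DecidableEq ι] {s : Finset ι} {F : ι → (Fin n → ℂ) → ℂ}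
    (hF : ∀ i ∈ s, DifferentiableAt ℝ (F i) z) :
    wg c (fun w => ∏ i ∈ s, F i w) j z
      = ∑ i ∈ s, wg c (F i) j z * ∏ k ∈ s.erase i, F k z := by
  simp only [wg, fderiv_finset_prod hF, ContinuousLinearMap.sum_apply,
    ContinuousLinearMap.smul_apply, smul_eq_mul]
  rw [Finset.mul_sum, ← Finset.sum_add_distrib, Finset.sum_div]
  exact Finset.sum_congr rfl fun i _ => by ring


lemma wg_def : wg c f j z
    = (fderiv ℝ f z (Pi.single j 1) + c * fderiv ℝ f z (Pi.single j Complex.I)) / 2 := rfl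

lemma fderiv_conj_apply (f : (Fin n → ℂ) → ℂ) (z v : Fin n → ℂ) :
    fderiv ℝ (fun w => (starRingEnd ℂ) (f w)) z v = (starRingEnd ℂ) (fderiv ℝ f z v) := by
  have h : (fun w => (starRingEnd ℂ) (f w)) = fun w => star (f w) := rfl
  rw [h, fderiv_star]
  simp

lemma wg_conj (f : (Fin n → ℂ) → ℂ) (c : ℂ) (j : Fin n) (z : Fin n → ℂ) :
    wg c (fun w => (starRingEnd ℂ) (f w)) j z
      = (starRingEnd ℂ) (wg ((starRingEnd ℂ) c) f j z) := by
  simp only [wg, fderiv_conj_apply, map_div₀, map_add, _root_.map_mul, Complex.conj_conj,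
    map_ofNat]

lemma fderiv_swap (hΩ : IsOpen Ω) (hf : ContDiffOn ℝ (⊤ : ℕ∞) f Ω) (hz : z ∈ Ω)
    (v w : Fin n → ℂ) :
    fderiv ℝ (fun x => fderiv ℝ f x v) z w = fderiv ℝ (fun x => fderiv ℝ f x w) z v := by
  have hev : ∀ᶠ y in nhds z, HasFDerivAt f (fderiv ℝ f y) y := by
    filter_upwards [hΩ.mem_nhds hz] with y hy
    exact (sm_diffAt hΩ hf hy).hasFDerivAt
  have h2 : DifferentiableAt ℝ (fderiv ℝ f) z :=
    (((hf.contDiffAt (hΩ.mem_nhds hz)).fderiv_right (m := (⊤ : ℕ∞))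
      (by simp)).differentiableAt (by simp))
  have hsymm := second_derivative_symmetric_of_eventually hev h2.hasFDerivAt
  have hv : ∀ a : Fin n → ℂ, fderiv ℝ (fun x => fderiv ℝ f x a) z
      = (ContinuousLinearMap.apply ℝ ℂ a).comp (fderiv ℝ (fderiv ℝ f) z) := by
    intro a
    exact ((ContinuousLinearMap.apply ℝ ℂ a).hasFDerivAt.comp z h2.hasFDerivAt).fderiv
  rw [hv v, hv w]
  exact hsymm w v

lemma wg_fderiv_apply (hΩ : IsOpen Ω) (hf : ContDiffOn ℝ (⊤ : ℕ∞) f Ω) (hz : z ∈ Ω)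
    (v : Fin n → ℂ) :
    fderiv ℝ (wg c f j) z v
      = (fderiv ℝ (fun x => fderiv ℝ f x (Pi.single j 1)) z v
         + c * fderiv ℝ (fun x => fderiv ℝ f x (Pi.single j Complex.I)) z v) / 2 := by
  have h1 : DifferentiableAt ℝ (fun x => fderiv ℝ f x (Pi.single j 1)) z :=
    sm_diffAt hΩ (contDiffOn_fderiv_apply hΩ hf _) hz
  have h2 : DifferentiableAt ℝ (fun x => fderiv ℝ f x (Pi.single j Complex.I)) z :=
    sm_diffAt hΩ (contDiffOn_fderiv_apply hΩ hf _) hz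
  have hw : wg c f j = fun x => (2 : ℂ)⁻¹ *
      (fderiv ℝ f x (Pi.single j 1) + c * fderiv ℝ f x (Pi.single j Complex.I)) := by
    funext x
    show (_ + _) / 2 = _
    ring
  rw [hw, fderiv_const_mul (h1.fun_add (h2.const_mul c)) _, fderiv_fun_add h1 (h2.const_mul c),
    fderiv_const_mul h2 c]
  simp only [ContinuousLinearMap.add_apply, ContinuousLinearMap.smul_apply,
    ContinuousLinearMap.coe_smul', Pi.smul_apply, smul_eq_mul]
  ring

lemma wg_comm (hΩ : IsOpen Ω) (hf : ContDiffOn ℝ (⊤ : ℕ∞) f Ω) (hz : z ∈ Ω)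
    (c d : ℂ) (a b : Fin n) :
    wg c (wg d f b) a z = wg d (wg c f a) b z := by
  rw [wg_def (c := c), wg_def (c := d)]
  rw [wg_fderiv_apply hΩ hf hz (Pi.single a 1), wg_fderiv_apply hΩ hf hz (Pi.single a Complex.I),
      wg_fderiv_apply hΩ hf hz (Pi.single b 1), wg_fderiv_apply hΩ hf hz (Pi.single b Complex.I)]
  conv_rhs => rw [fderiv_swap hΩ hf hz (Pi.single a 1) (Pi.single b 1),
    fderiv_swap hΩ hf hz (Pi.single a Complex.I) (Pi.single b 1),
    fderiv_swap hΩ hf hz (Pi.single a 1) (Pi.single b Complex.I),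
    fderiv_swap hΩ hf hz (Pi.single a Complex.I) (Pi.single b Complex.I)]
  ring

lemma wdz_eq {f : (Fin n → ℂ) → ℂ} {j : Fin n} : wdz f j = wg (-Complex.I) f j := by
  funext z
  show (_ - _) / 2 = (_ + _) / 2
  ring

lemma wdzbar_eq {f : (Fin n → ℂ) → ℂ} {j : Fin n} : wdzbar f j = wg Complex.I f j := rfl

lemma contDiffOn_prod {ι : Type*} {s : Finset ι} {F : ι → (Fin n → ℂ) → ℂ}
    (hF : ∀ i ∈ s, ContDiffOn ℝ (⊤ : ℕ∞) (F i) Ω) :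
    ContDiffOn ℝ (⊤ : ℕ∞) (fun w => ∏ i ∈ s, F i w) Ω := by
  classical
  induction s using Finset.induction with
  | empty => simpa using contDiffOn_const
  | @insert a s ha ih =>
    simp only [Finset.prod_insert ha]
    exact (hF a (Finset.mem_insert_self a s)).mul
      (ih fun i hi => hF i (Finset.mem_insert_of_mem hi))

lemma contDiffOn_det {M : (Fin n → ℂ) → Matrix (Fin n) (Fin n) ℂ}
    (hM : ∀ i j, ContDiffOn ℝ (⊤ : ℕ∞) (fun w => M w i j) Ω) :
    ContDiffOn ℝ (⊤ : ℕ∞) (fun w => (M w).det) Ω := by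
  have h : (fun w => (M w).det) = fun w => ∑ σ : Equiv.Perm (Fin n),
      ((Equiv.Perm.sign σ : ℤ) : ℂ) * ∏ i, M w (σ i) i := by
    funext w; rw [Matrix.det_apply']
  rw [h]
  exact ContDiffOn.sum fun σ _ =>
    contDiffOn_const.mul (contDiffOn_prod fun i _ => hM (σ i) i)

lemma fderiv_cplx_apply {u : (Fin n → ℂ) → ℝ} (hu : DifferentiableAt ℝ u z) (v : Fin n → ℂ) :
    fderiv ℝ (cplx u) z v = (fderiv ℝ u z v : ℂ) := by
  have h : HasFDerivAt (cplx u) (Complex.ofRealCLM.comp (fderiv ℝ u z)) z :=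
    Complex.ofRealCLM.hasFDerivAt.comp z hu.hasFDerivAt
  rw [h.fderiv]
  rfl

lemma contDiffOn_cplx {u : (Fin n → ℂ) → ℝ} (hu : ContDiffOn ℝ (⊤ : ℕ∞) u Ω) :
    ContDiffOn ℝ (⊤ : ℕ∞) (cplx u) Ω :=
  Complex.ofRealCLM.contDiff.comp_contDiffOn hu

lemma wg_exp (hΩ : IsOpen Ω) {u : (Fin n → ℂ) → ℝ} (hu : ContDiffOn ℝ (⊤ : ℕ∞) u Ω)
    (hz : z ∈ Ω) (a : ℝ) (c : ℂ) (p : Fin n) :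
    wg c (fun w => (Real.exp (a * u w) : ℂ)) p z
      = (a : ℂ) * Real.exp (a * u z) * wg c (cplx u) p z := by
  have hu' : DifferentiableAt ℝ u z :=
    (hu.contDiffAt (hΩ.mem_nhds hz)).differentiableAt (by simp)
  have hE : HasFDerivAt (fun w => (Real.exp (a * u w) : ℂ))
      (Complex.ofRealCLM.comp ((Real.exp (a * u z)) • (a • fderiv ℝ u z))) z := by
    have h1 : HasFDerivAt (fun w => a * u w) (a • fderiv ℝ u z) z :=
      hu'.hasFDerivAt.const_mul a
    exact Complex.ofRealCLM.hasFDerivAt.comp z h1.exp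
  have hfd : ∀ v, fderiv ℝ (fun w => (Real.exp (a * u w) : ℂ)) z v
      = ((Real.exp (a * u z) * (a * fderiv ℝ u z v) : ℝ) : ℂ) := by
    intro v
    rw [hE.fderiv]
    simp [mul_assoc]
  rw [wg_def, wg_def, hfd, hfd, fderiv_cplx_apply hu', fderiv_cplx_apply hu']
  push_cast
  ring

lemma det_updateRow_eq (N : Matrix (Fin n) (Fin n) ℂ) (i : Fin n) (v : Fin n → ℂ) :
    (N.updateRow i v).det = ∑ j, adjugate N j i * v j := by
  rw [← Matrix.det_transpose, ← Matrix.updateCol_transpose, ← Matrix.cramer_apply,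
    Matrix.cramer_eq_adjugate_mulVec]
  rw [Matrix.mulVec]
  simp only [dotProduct, ← Matrix.adjugate_transpose, Matrix.transpose_apply]

lemma det_updateRow_perm (N : Matrix (Fin n) (Fin n) ℂ) (i : Fin n) (v : Fin n → ℂ) :
    (N.updateRow i v).det
      = ∑ σ : Equiv.Perm (Fin n), ((Equiv.Perm.sign σ : ℤ) : ℂ) *
          (v (σ⁻¹ i) * ∏ k ∈ Finset.univ.erase (σ⁻¹ i), N (σ k) k) := by
  rw [Matrix.det_apply']
  refine Finset.sum_congr rfl fun σ _ => ?_
  congr 1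
  rw [← Finset.mul_prod_erase Finset.univ _ (Finset.mem_univ (σ⁻¹ i))]
  congr 1
  · rw [show σ (σ⁻¹ i) = i from Equiv.apply_symm_apply σ i, Matrix.updateRow_self]
  · refine Finset.prod_congr rfl fun k hk => ?_
    have hne : σ k ≠ i := fun h =>
      (Finset.mem_erase.1 hk).1 (by rw [← h, Equiv.Perm.coe_inv, Equiv.symm_apply_apply])
    rw [Matrix.updateRow_ne hne]

lemma wg_det (hΩ : IsOpen Ω) {M : (Fin n → ℂ) → Matrix (Fin n) (Fin n) ℂ}
    (hM : ∀ i j, ContDiffOn ℝ (⊤ : ℕ∞) (fun w => M w i j) Ω) (hz : z ∈ Ω) (c : ℂ) (p : Fin n) :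
    wg c (fun w => (M w).det) p z
      = ∑ i, ∑ j, adjugate (M z) j i * wg c (fun w => M w i j) p z := by
  classical
  have hdet : (fun w => (M w).det) = fun w => ∑ σ : Equiv.Perm (Fin n),
      ((Equiv.Perm.sign σ : ℤ) : ℂ) * ∏ i, M w (σ i) i := by
    funext w; rw [Matrix.det_apply']
  have hdiff : ∀ (i j : Fin n), DifferentiableAt ℝ (fun w => M w i j) z := fun i j =>
    sm_diffAt hΩ (hM i j) hz
  rw [hdet, wg_sum fun σ _ => sm_diffAt hΩ
    (contDiffOn_const.mul (contDiffOn_prod fun i _ => hM (σ i) i)) hz]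
  have hterm : ∀ σ : Equiv.Perm (Fin n),
      wg c (fun w => ((Equiv.Perm.sign σ : ℤ) : ℂ) * ∏ i, M w (σ i) i) p z
        = ((Equiv.Perm.sign σ : ℤ) : ℂ) *
            ∑ i, wg c (fun w => M w (σ i) i) p z * ∏ k ∈ Finset.univ.erase i, M z (σ k) k := by
    intro σ
    rw [wg_const_mul (sm_diffAt hΩ (contDiffOn_prod fun i _ => hM (σ i) i) hz),
      wg_prod fun i _ => hdiff (σ i) i]
  simp only [hterm]
  have hrhs : ∀ i : Fin n, ∑ j, adjugate (M z) j i * wg c (fun w => M w i j) p z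
      = ((M z).updateRow i (fun j => wg c (fun w => M w i j) p z)).det := by
    intro i; rw [det_updateRow_eq]
  rw [Finset.sum_congr rfl fun i _ => hrhs i]
  have hperm : ∀ i, ((M z).updateRow i (fun j => wg c (fun w => M w i j) p z)).det
      = ∑ σ : Equiv.Perm (Fin n), ((Equiv.Perm.sign σ : ℤ) : ℂ) *
          (wg c (fun w => M w i (σ⁻¹ i)) p z * ∏ k ∈ Finset.univ.erase (σ⁻¹ i), M z (σ k) k) :=
    fun i => det_updateRow_perm _ _ _
  rw [Finset.sum_congr rfl fun i _ => hperm i, Finset.sum_comm]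
  refine Finset.sum_congr rfl fun σ _ => ?_
  rw [Finset.mul_sum, ← Equiv.sum_comp σ (fun i => ((Equiv.Perm.sign σ : ℤ) : ℂ) *
    (wg c (fun w => M w i (σ⁻¹ i)) p z * ∏ k ∈ Finset.univ.erase (σ⁻¹ i), M z (σ k) k))]
  simp only [Equiv.Perm.coe_inv, Equiv.symm_apply_apply]

lemma contDiffOn_inv_entry {M : (Fin n → ℂ) → Matrix (Fin n) (Fin n) ℂ}
    (hM : ∀ i j, ContDiffOn ℝ (⊤ : ℕ∞) (fun w => M w i j) Ω)
    (hdet : ∀ w ∈ Ω, (M w).det ≠ 0) (i j : Fin n) :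
    ContDiffOn ℝ (⊤ : ℕ∞) (fun w => (M w)⁻¹ i j) Ω := by
  have h1 : (fun w => (M w)⁻¹ i j) = fun w => ((M w).det)⁻¹ * adjugate (M w) i j := by
    funext w
    rw [Matrix.inv_def]
    simp [Ring.inverse_eq_inv']
  rw [h1]
  refine ((contDiffOn_det hM).inv hdet).mul ?_
  have h2 : (fun w => adjugate (M w) i j)
      = fun w => ((M w).updateRow j (Pi.single i 1)).det := by
    funext w; rw [Matrix.adjugate_apply]
  rw [h2]
  apply contDiffOn_det
  intro a b
  simp only [Matrix.updateRow_apply]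
  split_ifs
  · exact contDiffOn_const
  · exact hM a b

/-! ### canonical derivative functions -/

variable (u : (Fin n → ℂ) → ℝ)

/-- `A_{ij}` as a `wg`-expression. -/
def aaf (i j : Fin n) : (Fin n → ℂ) → ℂ :=
  wg (-Complex.I) (wg Complex.I (cplx u) j) i

/-- `B_{ij}` as a `wg`-expression. -/
def bbf (i j : Fin n) : (Fin n → ℂ) → ℂ :=
  wg (-Complex.I) (wg (-Complex.I) (cplx u) j) i

lemma aaf_eq (i j : Fin n) : (fun w => hessA u w i j) = aaf u i j := by
  funext w
  show wdz (wdzbar (cplx u) j) i w = _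
  rw [wdz_eq, wdzbar_eq]
  rfl

lemma bbf_eq (i j : Fin n) : (fun w => hessB u w i j) = bbf u i j := by
  funext w
  show wdz (wdz (cplx u) j) i w = _
  rw [wdz_eq, wdz_eq]
  rfl

lemma aaf_eq' (w : Fin n → ℂ) (i j : Fin n) : hessA u w i j = aaf u i j w :=
  congrFun (aaf_eq u i j) w

lemma bbf_eq' (w : Fin n → ℂ) (i j : Fin n) : hessB u w i j = bbf u i j w :=
  congrFun (bbf_eq u i j) w

variable {u}

lemma contDiffOn_aaf (hΩ : IsOpen Ω) (hu : ContDiffOn ℝ (⊤ : ℕ∞) u Ω) (i j : Fin n) :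
    ContDiffOn ℝ (⊤ : ℕ∞) (aaf u i j) Ω :=
  contDiffOn_wg hΩ (contDiffOn_wg hΩ (contDiffOn_cplx hu))

lemma contDiffOn_bbf (hΩ : IsOpen Ω) (hu : ContDiffOn ℝ (⊤ : ℕ∞) u Ω) (i j : Fin n) :
    ContDiffOn ℝ (⊤ : ℕ∞) (bbf u i j) Ω :=
  contDiffOn_wg hΩ (contDiffOn_wg hΩ (contDiffOn_cplx hu))

/-! ### commutation of three and four operators -/

lemma wg_swap13 {f : (Fin n → ℂ) → ℂ} (hΩ : IsOpen Ω) (hf : ContDiffOn ℝ (⊤ : ℕ∞) f Ω)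
    (hz : z ∈ Ω) (c1 c2 c3 : ℂ) (a b d : Fin n) :
    wg c1 (wg c2 (wg c3 f d) b) a z = wg c3 (wg c2 (wg c1 f a) b) d z := by
  have h3 : ContDiffOn ℝ (⊤ : ℕ∞) (wg c3 f d) Ω := contDiffOn_wg hΩ hf
  rw [wg_comm hΩ h3 hz c1 c2 a b]
  have hmid : Set.EqOn (wg c1 (wg c3 f d) a) (wg c3 (wg c1 f a) d) Ω :=
    fun w hw => wg_comm hΩ hf hw c1 c3 a d
  rw [wg_congr hΩ hmid hz]
  exact wg_comm hΩ (contDiffOn_wg hΩ hf) hz c2 c3 b d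

lemma wg_comm4 {f : (Fin n → ℂ) → ℂ} (hΩ : IsOpen Ω) (hf : ContDiffOn ℝ (⊤ : ℕ∞) f Ω)
    (hz : z ∈ Ω) (c1 c2 c3 c4 : ℂ) (a b d e : Fin n) :
    wg c1 (wg c2 (wg c3 (wg c4 f e) d) b) a z
      = wg c4 (wg c3 (wg c1 (wg c2 f b) a) d) e z := by
  have hf1 : ContDiffOn ℝ (⊤ : ℕ∞) (wg c4 f e) Ω := contDiffOn_wg hΩ hf
  have hf2 : ContDiffOn ℝ (⊤ : ℕ∞) (wg c2 f b) Ω := contDiffOn_wg hΩ hf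
  -- step 1 : swap c2 and c3 inside c1
  have s1 : Set.EqOn (wg c2 (wg c3 (wg c4 f e) d) b) (wg c3 (wg c2 (wg c4 f e) b) d) Ω :=
    fun w hw => wg_comm hΩ hf1 hw c2 c3 b d
  rw [wg_congr hΩ s1 hz]
  -- step 2 : swap c2 and c4 inside c1, c3
  have s2 : Set.EqOn (wg c2 (wg c4 f e) b) (wg c4 (wg c2 f b) e) Ω :=
    fun w hw => wg_comm hΩ hf hw c2 c4 b e
  have s2' : Set.EqOn (wg c3 (wg c2 (wg c4 f e) b) d) (wg c3 (wg c4 (wg c2 f b) e) d) Ω :=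
    fun w hw => wg_congr hΩ s2 hw
  rw [wg_congr hΩ s2' hz]
  -- step 3 : swap c1 and c3 (outermost, at z)
  rw [wg_comm hΩ (contDiffOn_wg hΩ hf2) hz c1 c3 a d]
  -- step 4 : swap c1 and c4 inside c3
  have s4 : Set.EqOn (wg c1 (wg c4 (wg c2 f b) e) a) (wg c4 (wg c1 (wg c2 f b) a) e) Ω :=
    fun w hw => wg_comm hΩ hf2 hw c1 c4 a e
  rw [wg_congr hΩ s4 hz]
  -- step 5 : swap c3 and c4 (outermost, at z)
  exact wg_comm hΩ (contDiffOn_wg hΩ hf2) hz c3 c4 d e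

/-! ### conjugation symmetries -/

lemma conj_wg (f : (Fin n → ℂ) → ℂ) (c : ℂ) (j : Fin n) (z : Fin n → ℂ) :
    (starRingEnd ℂ) (wg c f j z)
      = wg ((starRingEnd ℂ) c) (fun w => (starRingEnd ℂ) (f w)) j z := by
  rw [wg_conj f ((starRingEnd ℂ) c) j z, Complex.conj_conj]

lemma conj_cplx : (fun w => (starRingEnd ℂ) (cplx u w)) = cplx u := by
  funext w
  exact Complex.conj_ofReal _

lemma conj_wg_cplx (c : ℂ) (j : Fin n) :
    (fun w => (starRingEnd ℂ) (wg c (cplx u) j w))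
      = wg ((starRingEnd ℂ) c) (cplx u) j := by
  funext w
  rw [conj_wg, conj_cplx]

lemma conj_aaf (hΩ : IsOpen Ω) (hu : ContDiffOn ℝ (⊤ : ℕ∞) u Ω) (hz : z ∈ Ω) (r s : Fin n) :
    (starRingEnd ℂ) (aaf u r s z) = aaf u s r z := by
  show (starRingEnd ℂ) (wg (-Complex.I) (wg Complex.I (cplx u) s) r z) = _
  rw [conj_wg]
  have h1 : (fun w => (starRingEnd ℂ) (wg Complex.I (cplx u) s w))
      = wg (-Complex.I) (cplx u) s := by
    rw [conj_wg_cplx]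
    congr 1
    simp [Complex.conj_I]
  rw [h1, show (starRingEnd ℂ) (-Complex.I) = Complex.I by simp]
  exact wg_comm hΩ (contDiffOn_cplx hu) hz Complex.I (-Complex.I) r s

lemma conj_bbf (s q : Fin n) :
    (fun w => (starRingEnd ℂ) (bbf u s q w)) = wg Complex.I (wg Complex.I (cplx u) q) s := by
  funext w
  show (starRingEnd ℂ) (wg (-Complex.I) (wg (-Complex.I) (cplx u) q) s w) = _
  rw [conj_wg]
  have h1 : (fun w => (starRingEnd ℂ) (wg (-Complex.I) (cplx u) q w))
      = wg Complex.I (cplx u) q := by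
    rw [conj_wg_cplx]
    congr 1
    simp
  rw [h1, show (starRingEnd ℂ) (-Complex.I) = Complex.I by simp]

lemma mconj_hessA (hΩ : IsOpen Ω) (hu : ContDiffOn ℝ (⊤ : ℕ∞) u Ω) (hz : z ∈ Ω) :
    mconj (hessA u z) = (hessA u z)ᵀ := by
  ext r s
  show (starRingEnd ℂ) (hessA u z r s) = hessA u z s r
  rw [aaf_eq' u z r s, aaf_eq' u z s r]
  exact conj_aaf hΩ hu hz r s

/-! ### consequences of the Monge–Ampère equation -/

lemma hdetne (hKE : ∀ w ∈ Ω, (hessA u w).det = (Real.exp (((n : ℝ) + 1) * u w) : ℂ)) :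
    ∀ w ∈ Ω, (hessA u w).det ≠ 0 := fun w hw => by
  rw [hKE w hw]
  exact_mod_cast Real.exp_ne_zero _

lemma KE1 (hΩ : IsOpen Ω) (hu : ContDiffOn ℝ (⊤ : ℕ∞) u Ω)
    (hKE : ∀ w ∈ Ω, (hessA u w).det = (Real.exp (((n : ℝ) + 1) * u w) : ℂ))
    (hz : z ∈ Ω) (c : ℂ) (p : Fin n) :
    ∑ i, ∑ j, (hessA u z)⁻¹ j i * wg c (aaf u i j) p z
      = ((n : ℂ) + 1) * wg c (cplx u) p z := by
  have hM : ∀ i j, ContDiffOn ℝ (⊤ : ℕ∞) (fun w => hessA u w i j) Ω := by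
    intro i j; rw [aaf_eq]; exact contDiffOn_aaf hΩ hu i j
  have hdet0 : (hessA u z).det ≠ 0 := hdetne hKE z hz
  have h1 := wg_det hΩ hM hz c p
  have h2 : Set.EqOn (fun w => (hessA u w).det)
      (fun w => (Real.exp (((n : ℝ) + 1) * u w) : ℂ)) Ω := fun w hw => hKE w hw
  rw [wg_congr hΩ h2 hz, wg_exp hΩ hu hz, ← hKE z hz] at h1
  have hadj : ∀ i j : Fin n, adjugate (hessA u z) j i
      = (hessA u z).det * (hessA u z)⁻¹ j i := by
    intro i j
    rw [Matrix.inv_def, Ring.inverse_eq_inv']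
    simp only [Matrix.smul_apply, smul_eq_mul]
    rw [mul_inv_cancel_left₀ hdet0]
  simp only [aaf_eq, hadj, mul_assoc, ← Finset.mul_sum] at h1
  rw [show (((n : ℝ) + 1 : ℝ) : ℂ) = (n : ℂ) + 1 by push_cast; ring] at h1
  apply mul_left_cancel₀ hdet0
  rw [← h1]
  ring

lemma dInv (hΩ : IsOpen Ω) (hu : ContDiffOn ℝ (⊤ : ℕ∞) u Ω)
    (hKE : ∀ w ∈ Ω, (hessA u w).det = (Real.exp (((n : ℝ) + 1) * u w) : ℂ))
    (hz : z ∈ Ω) (c : ℂ) (q j i : Fin n) :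
    wg c (fun w => (hessA u w)⁻¹ j i) q z
      = -(((hessA u z)⁻¹ * (Matrix.of fun r s => wg c (aaf u r s) q z) * (hessA u z)⁻¹) j i) := by
  have hM : ∀ i j, ContDiffOn ℝ (⊤ : ℕ∞) (fun w => hessA u w i j) Ω := by
    intro i j; rw [aaf_eq]; exact contDiffOn_aaf hΩ hu i j
  have hIa : ∀ r s, ContDiffOn ℝ (⊤ : ℕ∞) (fun w => (hessA u w)⁻¹ r s) Ω :=
    contDiffOn_inv_entry hM (hdetne hKE)
  have hunit : IsUnit (hessA u z).det := isUnit_iff_ne_zero.2 (hdetne hKE z hz)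
  set Az := hessA u z with hAz
  set P : Matrix (Fin n) (Fin n) ℂ :=
    Matrix.of fun a b => wg c (fun w => (hessA u w)⁻¹ a b) q z with hP
  set Q : Matrix (Fin n) (Fin n) ℂ := Matrix.of fun r s => wg c (aaf u r s) q z with hQ
  have key : P * Az + Az⁻¹ * Q = 0 := by
    ext a b
    have hEq : Set.EqOn (fun w => ∑ k, (hessA u w)⁻¹ a k * hessA u w k b)
        (fun _ => (1 : Matrix (Fin n) (Fin n) ℂ) a b) Ω := by
      intro w hw
      have h := Matrix.nonsing_inv_mul (hessA u w) (isUnit_iff_ne_zero.2 (hdetne hKE w hw))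
      calc ∑ k, (hessA u w)⁻¹ a k * hessA u w k b
          = ((hessA u w)⁻¹ * hessA u w) a b := (Matrix.mul_apply).symm
        _ = _ := by rw [h]
    have h0 : wg c (fun w => ∑ k, (hessA u w)⁻¹ a k * hessA u w k b) q z = 0 := by
      rw [wg_congr hΩ hEq hz]; exact wg_const _
    rw [wg_sum (fun k _ => sm_diffAt hΩ ((hIa a k).mul (hM k b)) hz)] at h0
    have h1 : ∀ k : Fin n, wg c (fun w => (hessA u w)⁻¹ a k * hessA u w k b) q z
        = wg c (fun w => (hessA u w)⁻¹ a k) q z * hessA u z k b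
          + (hessA u z)⁻¹ a k * wg c (fun w => hessA u w k b) q z := fun k =>
      wg_mul (sm_diffAt hΩ (hIa a k) hz) (sm_diffAt hΩ (hM k b) hz)
    simp only [h1, Finset.sum_add_distrib] at h0
    simp only [Matrix.add_apply, Matrix.mul_apply, Matrix.zero_apply, hP, hQ, hAz,
      Matrix.of_apply]
    rw [← h0]
    congr 1
    refine Finset.sum_congr rfl fun k _ => ?_
    rw [aaf_eq]
  have key2 : P = -(Az⁻¹ * Q * Az⁻¹) := by
    have h2 : P * Az = -(Az⁻¹ * Q) := eq_neg_of_add_eq_zero_left key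
    calc P = P * Az * Az⁻¹ := (Matrix.mul_nonsing_inv_cancel_right _ _ hunit).symm
      _ = -(Az⁻¹ * Q) * Az⁻¹ := by rw [h2]
      _ = -(Az⁻¹ * Q * Az⁻¹) := by rw [neg_mul]
  have hPji : P j i = wg c (fun w => (hessA u w)⁻¹ j i) q z := rfl
  rw [← hPji, key2, Matrix.neg_apply]

lemma KE2 (hΩ : IsOpen Ω) (hu : ContDiffOn ℝ (⊤ : ℕ∞) u Ω)
    (hKE : ∀ w ∈ Ω, (hessA u w).det = (Real.exp (((n : ℝ) + 1) * u w) : ℂ))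
    (hz : z ∈ Ω) (p q : Fin n) :
    ∑ i, ∑ j, (hessA u z)⁻¹ j i * wg Complex.I (wg (-Complex.I) (aaf u i j) p) q z
      = ((n : ℂ) + 1) * wg Complex.I (wg (-Complex.I) (cplx u) p) q z
        + ∑ i, ∑ j,
            (((hessA u z)⁻¹ * (Matrix.of fun r s => wg Complex.I (aaf u r s) q z) *
                (hessA u z)⁻¹) j i) * wg (-Complex.I) (aaf u i j) p z := by
  have hM : ∀ i j, ContDiffOn ℝ (⊤ : ℕ∞) (fun w => hessA u w i j) Ω := by
    intro i j; rw [aaf_eq]; exact contDiffOn_aaf hΩ hu i j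
  have hIa : ∀ r s, ContDiffOn ℝ (⊤ : ℕ∞) (fun w => (hessA u w)⁻¹ r s) Ω :=
    contDiffOn_inv_entry hM (hdetne hKE)
  have hterm : ∀ i j : Fin n, ContDiffOn ℝ (⊤ : ℕ∞)
      (fun w => (hessA u w)⁻¹ j i * wg (-Complex.I) (aaf u i j) p w) Ω := fun i j =>
    (hIa j i).mul (contDiffOn_wg hΩ (contDiffOn_aaf hΩ hu i j))
  have hFG : Set.EqOn
      (fun w => ∑ i, ∑ j, (hessA u w)⁻¹ j i * wg (-Complex.I) (aaf u i j) p w)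
      (fun w => ((n : ℂ) + 1) * wg (-Complex.I) (cplx u) p w) Ω :=
    fun w hw => KE1 hΩ hu hKE hw (-Complex.I) p
  have h := wg_congr (c := Complex.I) (j := q) hΩ hFG hz
  rw [wg_const_mul (sm_diffAt hΩ (contDiffOn_wg hΩ (contDiffOn_cplx hu)) hz)] at h
  rw [wg_sum (fun i _ => sm_diffAt hΩ (ContDiffOn.sum fun j _ => hterm i j) hz)] at h
  have hinner : ∀ i : Fin n,
      wg Complex.I (fun w => ∑ j, (hessA u w)⁻¹ j i * wg (-Complex.I) (aaf u i j) p w) q z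
        = ∑ j, (wg Complex.I (fun w => (hessA u w)⁻¹ j i) q z * wg (-Complex.I) (aaf u i j) p z
            + (hessA u z)⁻¹ j i * wg Complex.I (wg (-Complex.I) (aaf u i j) p) q z) := by
    intro i
    rw [wg_sum (fun j _ => sm_diffAt hΩ (hterm i j) hz)]
    exact Finset.sum_congr rfl fun j _ =>
      wg_mul (sm_diffAt hΩ (hIa j i) hz)
        (sm_diffAt hΩ (contDiffOn_wg hΩ (contDiffOn_aaf hΩ hu i j)) hz)
  simp only [hinner, dInv hΩ hu hKE hz Complex.I q, Finset.sum_add_distrib, neg_mul,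
    Finset.sum_neg_distrib] at h
  linear_combination h

lemma sum4_swap (F : Fin n → Fin n → Fin n → Fin n → ℂ) :
    ∑ a, ∑ b, ∑ c, ∑ d, F a b c d = ∑ d, ∑ b, ∑ c, ∑ a, F a b c d := by
  calc ∑ a, ∑ b, ∑ c, ∑ d, F a b c d
      = ∑ b, ∑ a, ∑ c, ∑ d, F a b c d := Finset.sum_comm
    _ = ∑ b, ∑ c, ∑ a, ∑ d, F a b c d :=
        Finset.sum_congr rfl fun b _ => Finset.sum_comm
    _ = ∑ b, ∑ c, ∑ d, ∑ a, F a b c d :=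
        Finset.sum_congr rfl fun b _ => Finset.sum_congr rfl fun c _ => Finset.sum_comm
    _ = ∑ b, ∑ d, ∑ c, ∑ a, F a b c d :=
        Finset.sum_congr rfl fun b _ => Finset.sum_comm
    _ = ∑ d, ∑ b, ∑ c, ∑ a, F a b c d := Finset.sum_comm

end MA


open MA in
theorem laplacian_A_eq_BB (n : ℕ) (Ω : Set (Fin n → ℂ)) (hΩ : IsOpen Ω)
    (u : (Fin n → ℂ) → ℝ) (hu : ContDiffOn ℝ (⊤ : ℕ∞) u Ω)
    (hpsh : ∀ z ∈ Ω, (hessA u z).PosDef)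
    (hKE : ∀ z ∈ Ω, (hessA u z).det = (Real.exp ((n + 1) * u z) : ℂ)) :
    ∀ z ∈ Ω,
      ∑ i, ∑ j, uInv u z i j • mwdz (mwdzbar (hessA u) j) i z
        = (∑ i, ∑ j, uInv u z i j •
            (mwdzbar (hessB u) j z * (mconj (hessA u z))⁻¹ *
              mwdz (fun w => mconj (hessB u w)) i z))
          + ((n : ℂ) + 1) • hessA u z := by
  intro z hz
  have hU : ContDiffOn ℝ (⊤ : ℕ∞) (cplx u) Ω := contDiffOn_cplx hu
  have hKE' : ∀ w ∈ Ω, (hessA u w).det = (Real.exp (((n : ℝ) + 1) * u w) : ℂ) := hKE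
  ext p q
  have hcomm4 : ∀ i j : Fin n,
      wg (-Complex.I) (wg Complex.I (aaf u p q) j) i z
        = wg Complex.I (wg (-Complex.I) (aaf u i j) p) q z := fun i j =>
    wg_comm4 hΩ hU hz (-Complex.I) Complex.I (-Complex.I) Complex.I i j p q
  have hE1 : ∀ r j : Fin n, wg Complex.I (bbf u p r) j z
      = wg (-Complex.I) (aaf u r j) p z := by
    intro r j
    have h1 := wg_swap13 hΩ hU hz Complex.I (-Complex.I) (-Complex.I) j p r
    have h2 := wg_comm (f := wg Complex.I (cplx u) j) hΩ (contDiffOn_wg hΩ hU) hz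
      (-Complex.I) (-Complex.I) r p
    exact h1.trans h2
  have hE2 : ∀ s i : Fin n,
      wg (-Complex.I) (wg Complex.I (wg Complex.I (cplx u) q) s) i z
        = wg Complex.I (aaf u i s) q z := by
    intro s i
    have h1 := wg_swap13 hΩ hU hz (-Complex.I) Complex.I Complex.I i s q
    have hmid : Set.EqOn (wg Complex.I (wg (-Complex.I) (cplx u) i) s)
        (wg (-Complex.I) (wg Complex.I (cplx u) s) i) Ω :=
      fun w hw => wg_comm hΩ hU hw Complex.I (-Complex.I) s i
    exact h1.trans (wg_congr hΩ hmid hz)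
  have hnp : wg Complex.I (wg (-Complex.I) (cplx u) p) q z = aaf u p q z :=
    wg_comm hΩ hU hz Complex.I (-Complex.I) q p
  have hM2 : (mconj (hessA u z))⁻¹ = ((hessA u z)⁻¹)ᵀ := by
    rw [mconj_hessA hΩ hu hz, Matrix.transpose_nonsing_inv]
  rw [hM2]
  simp only [Matrix.add_apply, Matrix.sum_apply, Matrix.smul_apply, smul_eq_mul,
    Matrix.mul_apply, Matrix.transpose_apply, mwdz, mwdzbar, Matrix.of_apply, uInv, mconj,
    Matrix.map_apply, wdz_eq, wdzbar_eq, bbf_eq', aaf_eq', conj_bbf]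
  simp only [hcomm4, hE1, hE2]
  rw [KE2 hΩ hu hKE' hz p q, hnp, add_comm]
  congr 1
  simp only [Matrix.mul_apply, Matrix.of_apply, Finset.sum_mul, Finset.mul_sum]
  rw [sum4_swap]
  refine Finset.sum_congr rfl fun i _ => Finset.sum_congr rfl fun j _ =>
    Finset.sum_congr rfl fun s _ => Finset.sum_congr rfl fun r _ => by ring

end
end

section
/- Let u be a smooth strictly plurisubharmonic function on an open set Ω ⊆ ℂ^n satisfying det(u_{ij̄}) = e^{(n+1)u} on Ω, and set A = (u_{ij̄}). Then, as an identity of n×n matrix-valued functions on Ω, u^{ij̄} ∂_i∂_{j̄} A = u^{ij̄} (∂_i A)·A⁻¹·(∂_{j̄} A) + (n+1)A (summation over i, j). -/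
open Complex Matrix
open scoped ComplexOrder

noncomputable section

set_option linter.unusedSectionVars false
namespace KEaux

variable {n : ℕ}

/-- Generic Wirtinger-type operator: `wdz = Wd (-I) i`, `wdzbar = Wd I i`. -/
def Wd (c : ℂ) (i : Fin n) (f : (Fin n → ℂ) → ℂ) (z : Fin n → ℂ) : ℂ :=
  (fderiv ℝ f z (Pi.single i 1) + c * fderiv ℝ f z (Pi.single i Complex.I)) / 2

theorem wdz_eq_W (f : (Fin n → ℂ) → ℂ) (i : Fin n) : wdz f i = Wd (-Complex.I) i f := by
  funext z; simp [wdz, Wd, sub_eq_add_neg, neg_mul]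

theorem wdzbar_eq_W (f : (Fin n → ℂ) → ℂ) (i : Fin n) : wdzbar f i = Wd Complex.I i f := rfl

variable {c d : ℂ} {i j : Fin n} {z : Fin n → ℂ} {Ω : Set (Fin n → ℂ)}

theorem Wd_congr {f g : (Fin n → ℂ) → ℂ} (h : f =ᶠ[nhds z] g) :
    Wd c i f z = Wd c i g z := by
  unfold Wd; rw [h.fderiv_eq]

theorem diffAt_of_contDiffOn {F : Type*} [NormedAddCommGroup F] [NormedSpace ℝ F]
    {f : (Fin n → ℂ) → F} (hf : ContDiffOn ℝ (⊤ : ℕ∞) f Ω) (hΩ : IsOpen Ω) (hz : z ∈ Ω) :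
    DifferentiableAt ℝ f z :=
  ((hf.differentiableOn (by norm_cast)).differentiableAt (hΩ.mem_nhds hz))

theorem Wd_add {f g : (Fin n → ℂ) → ℂ} (hf : DifferentiableAt ℝ f z)
    (hg : DifferentiableAt ℝ g z) :
    Wd c i (fun w => f w + g w) z = Wd c i f z + Wd c i g z := by
  unfold Wd
  rw [fderiv_fun_add hf hg]
  simp; ring

theorem Wd_const (a : ℂ) : Wd c i (fun _ => a) z = 0 := by
  unfold Wd; simp

theorem Wd_const_mul {f : (Fin n → ℂ) → ℂ} (hf : DifferentiableAt ℝ f z) (a : ℂ) :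
    Wd c i (fun w => a * f w) z = a * Wd c i f z := by
  unfold Wd
  rw [fderiv_const_mul hf]
  simp; ring

theorem Wd_mul {f g : (Fin n → ℂ) → ℂ} (hf : DifferentiableAt ℝ f z)
    (hg : DifferentiableAt ℝ g z) :
    Wd c i (fun w => f w * g w) z = Wd c i f z * g z + f z * Wd c i g z := by
  unfold Wd
  rw [fderiv_fun_mul hf hg]
  simp [smul_eq_mul]; ring

theorem Wd_sum {ι : Type*} (s : Finset ι) {f : ι → (Fin n → ℂ) → ℂ}
    (hf : ∀ p ∈ s, DifferentiableAt ℝ (f p) z) :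
    Wd c i (fun w => ∑ p ∈ s, f p w) z = ∑ p ∈ s, Wd c i (f p) z := by
  unfold Wd
  rw [fderiv_fun_sum hf]
  simp only [ContinuousLinearMap.coe_sum', Finset.sum_apply]
  rw [Finset.mul_sum, ← Finset.sum_add_distrib, Finset.sum_div]

theorem Wd_prod {ι : Type*} [DecidableEq ι] (s : Finset ι) {f : ι → (Fin n → ℂ) → ℂ}
    (hf : ∀ p ∈ s, DifferentiableAt ℝ (f p) z) :
    Wd c i (fun w => ∏ p ∈ s, f p w) z
      = ∑ p ∈ s, (∏ q ∈ s.erase p, f q z) * Wd c i (f p) z := by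
  have h := HasFDerivAt.finset_prod (u := s) (g := f)
    (g' := fun p => fderiv ℝ (f p) z) (fun p hp => (hf p hp).hasFDerivAt)
  unfold Wd
  rw [h.fderiv]
  simp only [ContinuousLinearMap.coe_sum', Finset.sum_apply, ContinuousLinearMap.coe_smul',
    Pi.smul_apply, smul_eq_mul]
  rw [Finset.mul_sum, ← Finset.sum_add_distrib, Finset.sum_div]
  exact Finset.sum_congr rfl fun p _ => by ring

theorem diffAt_prod {ι : Type*} [DecidableEq ι] (s : Finset ι) {f : ι → (Fin n → ℂ) → ℂ}
    (hf : ∀ p ∈ s, DifferentiableAt ℝ (f p) z) :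
    DifferentiableAt ℝ (fun w => ∏ p ∈ s, f p w) z :=
  (HasFDerivAt.finset_prod (u := s) (g := f)
    (g' := fun p => fderiv ℝ (f p) z) (fun p hp => (hf p hp).hasFDerivAt)).differentiableAt

theorem Wd_contDiffOn {f : (Fin n → ℂ) → ℂ} (hf : ContDiffOn ℝ (⊤ : ℕ∞) f Ω) (hΩ : IsOpen Ω) :
    ContDiffOn ℝ (⊤ : ℕ∞) (Wd c i f) Ω := by
  have h1 : ContDiffOn ℝ (⊤ : ℕ∞) (fderiv ℝ f) Ω := by
    have := hf.fderiv_of_isOpen hΩ (m := (⊤ : ℕ∞)) (by simp)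
    exact this
  have h2 : ContDiffOn ℝ (⊤ : ℕ∞) (fun w => fderiv ℝ f w (Pi.single i 1)) Ω :=
    h1.clm_apply contDiffOn_const
  have h3 : ContDiffOn ℝ (⊤ : ℕ∞) (fun w => fderiv ℝ f w (Pi.single i Complex.I)) Ω :=
    h1.clm_apply contDiffOn_const
  exact (h2.add (contDiffOn_const.mul h3)).div_const 2

theorem Wd_swap {f : (Fin n → ℂ) → ℂ} (hf : ContDiffOn ℝ (⊤ : ℕ∞) f Ω) (hΩ : IsOpen Ω) :
    ∀ z ∈ Ω, Wd c i (Wd d j f) z = Wd d j (Wd c i f) z := by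
  intro z hz
  have hca : ContDiffAt ℝ (⊤ : ℕ∞) f z := hf.contDiffAt (hΩ.mem_nhds hz)
  have hsymm : IsSymmSndFDerivAt ℝ f z := hca.isSymmSndFDerivAt (by rw [minSmoothness_of_isRCLikeNormedField]; exact WithTop.coe_le_coe.mpr le_top)
  have hD : DifferentiableAt ℝ (fderiv ℝ f) z := by
    have h1 : ContDiffOn ℝ (⊤ : ℕ∞) (fderiv ℝ f) Ω := hf.fderiv_of_isOpen hΩ (by simp)
    exact diffAt_of_contDiffOn h1 hΩ hz
  -- derivative of directional derivative
  have key : ∀ a b : Fin n → ℂ,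
      fderiv ℝ (fun w => fderiv ℝ f w b) z a = fderiv ℝ (fderiv ℝ f) z a b := by
    intro a b
    rw [fderiv_clm_apply hD (differentiableAt_const b)]
    simp
  have hdiffb : ∀ b : Fin n → ℂ, DifferentiableAt ℝ (fun w => fderiv ℝ f w b) z :=
    fun b => hD.clm_apply (differentiableAt_const b)
  have expand : ∀ (c' d' : ℂ) (i' j' : Fin n),
      Wd c' i' (Wd d' j' f) z
        = (fderiv ℝ (fderiv ℝ f) z (Pi.single i' 1) (Pi.single j' 1)
            + d' * fderiv ℝ (fderiv ℝ f) z (Pi.single i' 1) (Pi.single j' Complex.I)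
            + c' * (fderiv ℝ (fderiv ℝ f) z (Pi.single i' Complex.I) (Pi.single j' 1)
            + d' * fderiv ℝ (fderiv ℝ f) z (Pi.single i' Complex.I) (Pi.single j' Complex.I))) / 4 := by
    intro c' d' i' j'
    have : Wd d' j' f = fun w =>
        (fderiv ℝ f w (Pi.single j' 1) + d' * fderiv ℝ f w (Pi.single j' Complex.I)) / 2 := rfl
    rw [this]
    unfold Wd
    have hga : ∀ a : Fin n → ℂ,
        fderiv ℝ (fun w => (fderiv ℝ f w (Pi.single j' 1)
          + d' * fderiv ℝ f w (Pi.single j' Complex.I)) / 2) z a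
        = (fderiv ℝ (fderiv ℝ f) z a (Pi.single j' 1)
            + d' * fderiv ℝ (fderiv ℝ f) z a (Pi.single j' Complex.I)) / 2 := by
      intro a
      rw [show (fun w => (fderiv ℝ f w (Pi.single j' 1)
          + d' * fderiv ℝ f w (Pi.single j' Complex.I)) / 2)
        = fun w => (fderiv ℝ f w (Pi.single j' 1)
          + d' * fderiv ℝ f w (Pi.single j' Complex.I)) * (2 : ℂ)⁻¹ by
          funext w; rw [div_eq_mul_inv]]
      rw [fderiv_mul_const ((hdiffb _).fun_add ((hdiffb _).const_mul d'))]
      rw [fderiv_fun_add (hdiffb _) ((hdiffb _).const_mul d')]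
      rw [fderiv_const_mul (hdiffb _)]
      simp only [ContinuousLinearMap.coe_smul', Pi.smul_apply, ContinuousLinearMap.add_apply,
        smul_eq_mul, key]
      ring
    rw [hga, hga]
    ring
  rw [expand c d i j, expand d c j i]
  rw [hsymm (Pi.single i 1) (Pi.single j 1), hsymm (Pi.single i 1) (Pi.single j Complex.I),
    hsymm (Pi.single i Complex.I) (Pi.single j 1),
    hsymm (Pi.single i Complex.I) (Pi.single j Complex.I)]
  ring


theorem Wd_congr_on (hΩ : IsOpen Ω) {f g : (Fin n → ℂ) → ℂ} (h : ∀ w ∈ Ω, f w = g w) :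
    ∀ z ∈ Ω, Wd c i f z = Wd c i g z := fun _ hz =>
  Wd_congr (Filter.eventuallyEq_of_mem (hΩ.mem_nhds hz) h)

/-- `O₁(O₂(O₃ f)) = O₂(O₃(O₁ f))` on `Ω`. -/
theorem Wd_comm2 {c1 c2 c3 : ℂ} {i1 i2 i3 : Fin n} {f : (Fin n → ℂ) → ℂ}
    (hf : ContDiffOn ℝ (⊤ : ℕ∞) f Ω) (hΩ : IsOpen Ω) :
    ∀ z ∈ Ω, Wd c1 i1 (Wd c2 i2 (Wd c3 i3 f)) z = Wd c2 i2 (Wd c3 i3 (Wd c1 i1 f)) z := by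
  intro z hz
  rw [Wd_swap (Wd_contDiffOn hf hΩ) hΩ z hz]
  exact Wd_congr_on hΩ (fun w hw => Wd_swap hf hΩ w hw) z hz

/-- `O₁(O₂(O₃(O₄ f))) = O₂(O₃(O₄(O₁ f)))` on `Ω`. -/
theorem Wd_comm3 {c1 c2 c3 c4 : ℂ} {i1 i2 i3 i4 : Fin n} {f : (Fin n → ℂ) → ℂ}
    (hf : ContDiffOn ℝ (⊤ : ℕ∞) f Ω) (hΩ : IsOpen Ω) :
    ∀ z ∈ Ω, Wd c1 i1 (Wd c2 i2 (Wd c3 i3 (Wd c4 i4 f))) z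
      = Wd c2 i2 (Wd c3 i3 (Wd c4 i4 (Wd c1 i1 f))) z := by
  intro z hz
  rw [Wd_swap (Wd_contDiffOn (Wd_contDiffOn hf hΩ) hΩ) hΩ z hz]
  exact Wd_congr_on hΩ (fun w hw => Wd_comm2 hf hΩ w hw) z hz

theorem Wd_cplx_exp {φ : (Fin n → ℂ) → ℝ} (hφ : DifferentiableAt ℝ φ z) :
    Wd c i (fun w => ((Real.exp (φ w) : ℝ) : ℂ)) z
      = Real.exp (φ z) * Wd c i (fun w => ((φ w : ℝ) : ℂ)) z := by
  have h1 : HasFDerivAt (fun w => Real.exp (φ w)) (Real.exp (φ z) • fderiv ℝ φ z) z :=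
    hφ.hasFDerivAt.exp
  have h2 : HasFDerivAt (fun w => ((Real.exp (φ w) : ℝ) : ℂ))
      (Complex.ofRealCLM.comp (Real.exp (φ z) • fderiv ℝ φ z)) z :=
    Complex.ofRealCLM.hasFDerivAt.comp z h1
  have h3 : HasFDerivAt (fun w => ((φ w : ℝ) : ℂ))
      (Complex.ofRealCLM.comp (fderiv ℝ φ z)) z :=
    Complex.ofRealCLM.hasFDerivAt.comp z hφ.hasFDerivAt
  unfold Wd
  rw [h2.fderiv, h3.fderiv]
  simp only [ContinuousLinearMap.coe_comp', Function.comp_apply,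
    ContinuousLinearMap.coe_smul', Pi.smul_apply, smul_eq_mul, Complex.ofRealCLM_apply]
  push_cast
  ring

theorem Wd_cplx_const_mul {φ : (Fin n → ℂ) → ℝ} (hφ : DifferentiableAt ℝ φ z) (r : ℝ) :
    Wd c i (fun w => ((r * φ w : ℝ) : ℂ)) z = (r : ℂ) * Wd c i (fun w => ((φ w : ℝ) : ℂ)) z := by
  have h1 : HasFDerivAt (fun w => r * φ w) (r • fderiv ℝ φ z) z :=
    hφ.hasFDerivAt.const_mul r
  have h2 : HasFDerivAt (fun w => ((r * φ w : ℝ) : ℂ))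
      (Complex.ofRealCLM.comp (r • fderiv ℝ φ z)) z :=
    Complex.ofRealCLM.hasFDerivAt.comp z h1
  have h3 : HasFDerivAt (fun w => ((φ w : ℝ) : ℂ))
      (Complex.ofRealCLM.comp (fderiv ℝ φ z)) z :=
    Complex.ofRealCLM.hasFDerivAt.comp z hφ.hasFDerivAt
  unfold Wd
  rw [h2.fderiv, h3.fderiv]
  simp only [ContinuousLinearMap.coe_comp', Function.comp_apply,
    ContinuousLinearMap.coe_smul', Pi.smul_apply, smul_eq_mul, Complex.ofRealCLM_apply]
  push_cast
  ring

theorem diffAt_cplx_exp {φ : (Fin n → ℂ) → ℝ} (hφ : DifferentiableAt ℝ φ z) :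
    DifferentiableAt ℝ (fun w => ((Real.exp (φ w) : ℝ) : ℂ)) z :=
  (Complex.ofRealCLM.hasFDerivAt.comp z hφ.hasFDerivAt.exp).differentiableAt

theorem diffAt_det {M : (Fin n → ℂ) → Matrix (Fin n) (Fin n) ℂ}
    (h : ∀ a b, DifferentiableAt ℝ (fun w => M w a b) z) :
    DifferentiableAt ℝ (fun w => (M w).det) z := by
  simp only [Matrix.det_apply, Units.smul_def, zsmul_eq_mul]
  exact DifferentiableAt.fun_sum fun σ _ =>
    (diffAt_prod Finset.univ (fun q _ => h (σ q) q)).const_mul _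

theorem det_updateColumn_eq (M : Matrix (Fin n) (Fin n) ℂ) (p : Fin n) (b : Fin n → ℂ) :
    (M.updateCol p b).det
      = ∑ σ : Equiv.Perm (Fin n), ((Equiv.Perm.sign σ : ℤ) : ℂ)
          * (b (σ p) * ∏ q ∈ Finset.univ.erase p, M (σ q) q) := by
  rw [Matrix.det_apply]
  refine Finset.sum_congr rfl fun σ _ => ?_
  rw [Units.smul_def, zsmul_eq_mul]
  congr 1
  rw [← Finset.mul_prod_erase Finset.univ _ (Finset.mem_univ p)]
  congr 1
  · rw [Matrix.updateCol_self]
  · exact Finset.prod_congr rfl fun q hq =>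
      by rw [Matrix.updateCol_apply, if_neg (Finset.ne_of_mem_erase hq)]

theorem Wd_det_gen {M : (Fin n → ℂ) → Matrix (Fin n) (Fin n) ℂ}
    (h : ∀ a b, DifferentiableAt ℝ (fun w => M w a b) z) :
    Wd c i (fun w => (M w).det) z
      = ∑ p, ∑ r, (M z).adjugate p r * Wd c i (fun w => M w r p) z := by
  have hprod : ∀ σ : Equiv.Perm (Fin n),
      DifferentiableAt ℝ (fun w => ∏ q, M w (σ q) q) z :=
    fun σ => diffAt_prod Finset.univ (fun q _ => h (σ q) q)
  have e1 : Wd c i (fun w => (M w).det) z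
      = Wd c i (fun w => ∑ σ : Equiv.Perm (Fin n),
          ((Equiv.Perm.sign σ : ℤ) : ℂ) * ∏ q, M w (σ q) q) z := by
    apply Wd_congr
    filter_upwards with w
    rw [Matrix.det_apply]
    exact Finset.sum_congr rfl fun σ _ => by rw [Units.smul_def, zsmul_eq_mul]
  rw [e1, Wd_sum Finset.univ (fun σ _ => (hprod σ).const_mul _)]
  have e2 : ∀ σ : Equiv.Perm (Fin n),
      Wd c i (fun w => ((Equiv.Perm.sign σ : ℤ) : ℂ) * ∏ q, M w (σ q) q) z
        = ((Equiv.Perm.sign σ : ℤ) : ℂ) * ∑ p, (∏ q ∈ Finset.univ.erase p, M z (σ q) q)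
            * Wd c i (fun w => M w (σ p) p) z := by
    intro σ
    rw [Wd_const_mul (hprod σ), Wd_prod Finset.univ (fun q _ => h (σ q) q)]
  rw [Finset.sum_congr rfl fun σ _ => e2 σ]
  rw [Finset.sum_congr rfl fun σ (_ : σ ∈ Finset.univ) =>
    (Finset.mul_sum Finset.univ _ (((Equiv.Perm.sign σ : ℤ) : ℂ)))]
  rw [Finset.sum_comm]
  refine Finset.sum_congr rfl fun p _ => ?_
  have e3 : (∑ σ : Equiv.Perm (Fin n), ((Equiv.Perm.sign σ : ℤ) : ℂ)
      * ((∏ q ∈ Finset.univ.erase p, M z (σ q) q) * Wd c i (fun w => M w (σ p) p) z))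
      = ((M z).updateCol p fun r => Wd c i (fun w => M w r p) z).det := by
    rw [det_updateColumn_eq]
    exact Finset.sum_congr rfl fun σ _ => by ring
  rw [e3, ← Matrix.cramer_apply, Matrix.cramer_eq_adjugate_mulVec]
  simp [Matrix.mulVec, dotProduct]


section Uspecific

variable {u : (Fin n → ℂ) → ℝ}

theorem hessA_entry (u : (Fin n → ℂ) → ℝ) (r p : Fin n) :
    (fun w => hessA u w r p) = Wd (-Complex.I) r (Wd Complex.I p (cplx u)) := by
  funext w
  simp only [hessA, Matrix.of_apply, wdz_eq_W, wdzbar_eq_W]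

theorem cplx_contDiffOn (hu : ContDiffOn ℝ (⊤ : ℕ∞) u Ω) :
    ContDiffOn ℝ (⊤ : ℕ∞) (cplx u) Ω :=
  Complex.ofRealCLM.contDiff.comp_contDiffOn hu

theorem hessA_smooth (hu : ContDiffOn ℝ (⊤ : ℕ∞) u Ω) (hΩ : IsOpen Ω) (r p : Fin n) :
    ContDiffOn ℝ (⊤ : ℕ∞) (fun w => hessA u w r p) Ω := by
  rw [hessA_entry]
  exact Wd_contDiffOn (Wd_contDiffOn (cplx_contDiffOn hu) hΩ) hΩ

theorem hessA_diffAt (hu : ContDiffOn ℝ (⊤ : ℕ∞) u Ω) (hΩ : IsOpen Ω) (hz : z ∈ Ω)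
    (r p : Fin n) : DifferentiableAt ℝ (fun w => hessA u w r p) z :=
  diffAt_of_contDiffOn (hessA_smooth hu hΩ r p) hΩ hz

theorem inv_apply_eq (M : Matrix (Fin n) (Fin n) ℂ) (p r : Fin n) :
    M⁻¹ p r = (M.det)⁻¹ * M.adjugate p r := by
  rw [Matrix.inv_def, Ring.inverse_eq_inv', Matrix.smul_apply, smul_eq_mul]

variable (hu : ContDiffOn ℝ (⊤ : ℕ∞) u Ω) (hΩ : IsOpen Ω)
  (hKE : ∀ z ∈ Ω, (hessA u z).det = (Real.exp ((n + 1) * u z) : ℂ))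

include hu hΩ hKE

theorem det_ne_zero (hz : z ∈ Ω) : (hessA u z).det ≠ 0 := by
  rw [hKE z hz]
  exact Complex.ofReal_ne_zero.mpr (Real.exp_ne_zero _)

/-- First derivative of the Monge–Ampère equation: `∑ u^{pr̄'} ∂ u_{rp̄} = (n+1) ∂u`. -/
theorem first_deriv_KE (c : ℂ) (k : Fin n) :
    ∀ w ∈ Ω, ∑ p, ∑ r, (hessA u w)⁻¹ p r * Wd c k (fun v => hessA u v r p) w
      = ((n : ℂ) + 1) * Wd c k (cplx u) w := by
  intro w hw
  have hdiffA : ∀ a b, DifferentiableAt ℝ (fun v => hessA u v a b) w :=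
    fun a b => hessA_diffAt hu hΩ hw a b
  have hudiff : DifferentiableAt ℝ u w := diffAt_of_contDiffOn hu hΩ hw
  have hφ : DifferentiableAt ℝ (fun v => ((n : ℝ) + 1) * u v) w := hudiff.const_mul _
  have h1 : Wd c k (fun v => (hessA u v).det) w
      = ∑ p, ∑ r, (hessA u w).adjugate p r * Wd c k (fun v => hessA u v r p) w :=
    Wd_det_gen hdiffA
  have h2 : Wd c k (fun v => (hessA u v).det) w
      = Wd c k (fun v => ((Real.exp (((n : ℝ) + 1) * u v) : ℝ) : ℂ)) w :=
    Wd_congr (Filter.eventuallyEq_of_mem (hΩ.mem_nhds hw) hKE)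
  have h3 : Wd c k (fun v => ((Real.exp (((n : ℝ) + 1) * u v) : ℝ) : ℂ)) w
      = (Real.exp (((n : ℝ) + 1) * u w) : ℂ) * (((n : ℂ) + 1) * Wd c k (cplx u) w) := by
    rw [Wd_cplx_exp hφ]
    have := Wd_cplx_const_mul (c := c) (i := k) (z := w) hudiff ((n : ℝ) + 1)
    rw [show (fun v => ((u v : ℝ) : ℂ)) = cplx u from rfl] at this
    rw [this]
    push_cast
    ring
  have key : ∑ p, ∑ r, (hessA u w).adjugate p r * Wd c k (fun v => hessA u v r p) w
      = (Real.exp (((n : ℝ) + 1) * u w) : ℂ) * (((n : ℂ) + 1) * Wd c k (cplx u) w) := by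
    rw [← h1, h2, h3]
  have hdet : (hessA u w).det = (Real.exp (((n : ℝ) + 1) * u w) : ℂ) := hKE w hw
  have hexp0 : (Real.exp (((n : ℝ) + 1) * u w) : ℂ) ≠ 0 :=
    Complex.ofReal_ne_zero.mpr (Real.exp_ne_zero _)
  calc ∑ p, ∑ r, (hessA u w)⁻¹ p r * Wd c k (fun v => hessA u v r p) w
      = ((hessA u w).det)⁻¹
        * ∑ p, ∑ r, (hessA u w).adjugate p r * Wd c k (fun v => hessA u v r p) w := by
        rw [Finset.mul_sum]
        refine Finset.sum_congr rfl fun p _ => ?_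
        rw [Finset.mul_sum]
        refine Finset.sum_congr rfl fun r _ => ?_
        rw [inv_apply_eq]; ring
    _ = ((n : ℂ) + 1) * Wd c k (cplx u) w := by
        rw [key, hdet]
        field_simp

theorem inv_entry_diffAt (hz : z ∈ Ω) (p r : Fin n) :
    DifferentiableAt ℝ (fun w => (hessA u w)⁻¹ p r) z := by
  have hudiff : DifferentiableAt ℝ u z := diffAt_of_contDiffOn hu hΩ hz
  have hadj : DifferentiableAt ℝ (fun w => (hessA u w).adjugate p r) z := by
    have hup : ∀ a b, DifferentiableAt ℝ
        (fun w => (hessA u w).updateRow r (Pi.single p 1) a b) z := by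
      intro a b
      rcases eq_or_ne a r with h | h
      · simp only [Matrix.updateRow_apply, h, if_pos rfl]
        exact differentiableAt_const _
      · simp only [Matrix.updateRow_apply, if_neg h]
        exact hessA_diffAt hu hΩ hz a b
    have := diffAt_det hup
    have heq : (fun w => (hessA u w).adjugate p r)
        = fun w => ((hessA u w).updateRow r (Pi.single p 1)).det := by
      funext w; rw [Matrix.adjugate_apply]
    rw [heq]; exact this
  have hG : DifferentiableAt ℝ
      (fun w => ((Real.exp (-(((n : ℝ) + 1) * u w)) : ℝ) : ℂ)
        * (hessA u w).adjugate p r) z :=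
    (diffAt_cplx_exp (hudiff.const_mul _).neg).mul hadj
  refine hG.congr_of_eventuallyEq ?_
  filter_upwards [hΩ.mem_nhds hz] with w hw
  rw [inv_apply_eq, hKE w hw]
  rw [Real.exp_neg, Complex.ofReal_inv]

/-- Derivative of the inverse matrix: `∂(A⁻¹) = -A⁻¹ (∂A) A⁻¹`. -/
theorem inv_deriv (c : ℂ) (l : Fin n) (hz : z ∈ Ω) :
    (Matrix.of fun p r => Wd c l (fun w => (hessA u w)⁻¹ p r) z)
      = -((hessA u z)⁻¹
          * (Matrix.of fun s t => Wd c l (fun w => hessA u w s t) z)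
          * (hessA u z)⁻¹) := by
  set N : Matrix (Fin n) (Fin n) ℂ :=
    Matrix.of fun p r => Wd c l (fun w => (hessA u w)⁻¹ p r) z with hN
  set M' : Matrix (Fin n) (Fin n) ℂ :=
    Matrix.of fun s t => Wd c l (fun w => hessA u w s t) z with hM'
  have hdet0 : (hessA u z).det ≠ 0 := det_ne_zero hu hΩ hKE hz
  have step : N * hessA u z = -((hessA u z)⁻¹ * M') := by
    ext p q
    have hfun : ∀ w ∈ Ω, (∑ s, (hessA u w)⁻¹ p s * hessA u w s q)
        = if p = q then 1 else 0 := by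
      intro w hw
      have h := Matrix.nonsing_inv_mul (hessA u w) (isUnit_iff_ne_zero.mpr (det_ne_zero hu hΩ hKE hw))
      have := congrFun (congrFun h p) q
      simpa [Matrix.mul_apply, Matrix.one_apply] using this
    have h0 : Wd c l (fun w => ∑ s, (hessA u w)⁻¹ p s * hessA u w s q) z = 0 := by
      rw [Wd_congr_on hΩ hfun z hz, Wd_const]
    rw [Wd_sum Finset.univ (fun s _ =>
      (inv_entry_diffAt hu hΩ hKE hz p s).fun_mul (hessA_diffAt hu hΩ hz s q))] at h0
    have h0' : ∑ s, (Wd c l (fun w => (hessA u w)⁻¹ p s) z * hessA u z s q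
        + (hessA u z)⁻¹ p s * Wd c l (fun w => hessA u w s q) z) = 0 := by
      rw [← h0]
      exact Finset.sum_congr rfl fun s _ => (Wd_mul
        (inv_entry_diffAt hu hΩ hKE hz p s) (hessA_diffAt hu hΩ hz s q)).symm
    rw [Finset.sum_add_distrib] at h0'
    simp only [Matrix.mul_apply, Matrix.neg_apply, hN, hM', Matrix.of_apply]
    linear_combination h0'
  calc N = N * (hessA u z * (hessA u z)⁻¹) := by
        rw [Matrix.mul_nonsing_inv _ (isUnit_iff_ne_zero.mpr hdet0), Matrix.mul_one]
    _ = (N * hessA u z) * (hessA u z)⁻¹ := by rw [Matrix.mul_assoc]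
    _ = -((hessA u z)⁻¹ * M' * (hessA u z)⁻¹) := by
        rw [step, Matrix.neg_mul]


/-- Second derivative of the Monge–Ampère equation. -/
theorem second_deriv_KE (k l : Fin n) (hz : z ∈ Ω) :
    ∑ p, ∑ r, (hessA u z)⁻¹ p r
        * Wd Complex.I l (Wd (-Complex.I) k (fun w => hessA u w r p)) z
      = (∑ p, ∑ r,
          ((hessA u z)⁻¹
            * (Matrix.of fun s t => Wd Complex.I l (fun w => hessA u w s t) z)
            * (hessA u z)⁻¹) p r * Wd (-Complex.I) k (fun w => hessA u w r p) z)
        + ((n : ℂ) + 1) * Wd Complex.I l (Wd (-Complex.I) k (cplx u)) z := by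
  have hf0 : ContDiffOn ℝ (⊤ : ℕ∞) (cplx u) Ω := cplx_contDiffOn hu
  have hWdA_diff : ∀ (c : ℂ) (k' r p : Fin n),
      DifferentiableAt ℝ (Wd c k' (fun w => hessA u w r p)) z :=
    fun c k' r p => diffAt_of_contDiffOn (Wd_contDiffOn (hessA_smooth hu hΩ r p) hΩ) hΩ hz
  have hinvd : ∀ p r : Fin n, DifferentiableAt ℝ (fun w => (hessA u w)⁻¹ p r) z :=
    inv_entry_diffAt hu hΩ hKE hz
  have hsummand_diff : ∀ p r : Fin n, DifferentiableAt ℝ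
      (fun w => (hessA u w)⁻¹ p r * Wd (-Complex.I) k (fun v => hessA u v r p) w) z :=
    fun p r => (hinvd p r).mul (hWdA_diff _ _ _ _)
  have expand : Wd Complex.I l
      (fun w => ∑ p, ∑ r, (hessA u w)⁻¹ p r
        * Wd (-Complex.I) k (fun v => hessA u v r p) w) z
      = ∑ p, ∑ r,
          (Wd Complex.I l (fun w => (hessA u w)⁻¹ p r) z
              * Wd (-Complex.I) k (fun v => hessA u v r p) z
            + (hessA u z)⁻¹ p r
              * Wd Complex.I l (Wd (-Complex.I) k (fun v => hessA u v r p)) z) := by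
    rw [Wd_sum Finset.univ (fun p _ => DifferentiableAt.fun_sum fun r _ => hsummand_diff p r)]
    refine Finset.sum_congr rfl fun p _ => ?_
    rw [Wd_sum Finset.univ (fun r _ => hsummand_diff p r)]
    exact Finset.sum_congr rfl fun r _ => Wd_mul (hinvd p r) (hWdA_diff _ _ _ _)
  have hleft : Wd Complex.I l
      (fun w => ∑ p, ∑ r, (hessA u w)⁻¹ p r
        * Wd (-Complex.I) k (fun v => hessA u v r p) w) z
      = ((n : ℂ) + 1) * Wd Complex.I l (Wd (-Complex.I) k (cplx u)) z := by
    rw [Wd_congr_on (c := Complex.I) (i := l) hΩ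
      (first_deriv_KE hu hΩ hKE (-Complex.I) k) z hz]
    rw [Wd_const_mul (diffAt_of_contDiffOn (Wd_contDiffOn hf0 hΩ) hΩ hz)]
  have hNentry : ∀ p r : Fin n, Wd Complex.I l (fun w => (hessA u w)⁻¹ p r) z
      = -(((hessA u z)⁻¹
          * (Matrix.of fun s t => Wd Complex.I l (fun w => hessA u w s t) z)
          * (hessA u z)⁻¹) p r) := by
    intro p r
    have h := inv_deriv hu hΩ hKE Complex.I l hz
    have h2 := congrFun (congrFun h p) r
    simpa [Matrix.neg_apply] using h2
  have hsplit : ∑ p, ∑ r,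
      (Wd Complex.I l (fun w => (hessA u w)⁻¹ p r) z
          * Wd (-Complex.I) k (fun v => hessA u v r p) z
        + (hessA u z)⁻¹ p r
          * Wd Complex.I l (Wd (-Complex.I) k (fun v => hessA u v r p)) z)
      = (∑ p, ∑ r, Wd Complex.I l (fun w => (hessA u w)⁻¹ p r) z
          * Wd (-Complex.I) k (fun v => hessA u v r p) z)
        + ∑ p, ∑ r, (hessA u z)⁻¹ p r
          * Wd Complex.I l (Wd (-Complex.I) k (fun v => hessA u v r p)) z := by
    rw [← Finset.sum_add_distrib]
    exact Finset.sum_congr rfl fun p _ => Finset.sum_add_distrib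
  have hfirst : ∑ p, ∑ r, Wd Complex.I l (fun w => (hessA u w)⁻¹ p r) z
      * Wd (-Complex.I) k (fun v => hessA u v r p) z
      = -∑ p, ∑ r, ((hessA u z)⁻¹
          * (Matrix.of fun s t => Wd Complex.I l (fun w => hessA u w s t) z)
          * (hessA u z)⁻¹) p r * Wd (-Complex.I) k (fun v => hessA u v r p) z := by
    rw [← Finset.sum_neg_distrib]
    refine Finset.sum_congr rfl fun p _ => ?_
    rw [← Finset.sum_neg_distrib]
    refine Finset.sum_congr rfl fun r _ => ?_
    rw [hNentry p r]; ring
  have main := expand.symm.trans hleft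
  rw [hsplit, hfirst] at main
  linear_combination main


omit hu hΩ hKE in
theorem sum4_comm (P Q S : Fin n → Fin n → ℂ) :
    ∑ p, ∑ r, (∑ t, (∑ s, P p s * Q s t) * P t r) * S r p
      = ∑ r, ∑ t, P t r * (∑ x, (∑ y, S r y * P y x) * Q x t) := by
  simp only [Finset.sum_mul, Finset.mul_sum]
  conv_lhs => rw [Finset.sum_comm]
  refine Finset.sum_congr rfl fun r _ => ?_
  conv_lhs => rw [Finset.sum_comm]
  refine Finset.sum_congr rfl fun t _ => ?_
  conv_lhs => rw [Finset.sum_comm]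
  refine Finset.sum_congr rfl fun s _ => ?_
  refine Finset.sum_congr rfl fun p _ => ?_
  ring

omit hKE in
theorem eqT1 (hz : z ∈ Ω) (k l r p : Fin n) :
    Wd Complex.I l (Wd (-Complex.I) k (fun w => hessA u w r p)) z
      = Wd (-Complex.I) r (Wd Complex.I p (fun w => hessA u w k l)) z := by
  have hf0 : ContDiffOn ℝ (⊤ : ℕ∞) (cplx u) Ω := cplx_contDiffOn hu
  rw [hessA_entry u r p, hessA_entry u k l]
  rw [Wd_comm3 hf0 hΩ z hz]
  exact Wd_comm2 (Wd_contDiffOn hf0 hΩ) hΩ z hz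

omit hKE in
theorem eq2' (hz : z ∈ Ω) (l s t : Fin n) :
    Wd Complex.I l (fun w => hessA u w s t) z
      = Wd Complex.I t (fun w => hessA u w s l) z := by
  have hf0 : ContDiffOn ℝ (⊤ : ℕ∞) (cplx u) Ω := cplx_contDiffOn hu
  rw [hessA_entry u s t, hessA_entry u s l]
  have h1 := Wd_comm2 (c1 := Complex.I) (i1 := l) (c2 := -Complex.I) (i2 := s)
    (c3 := Complex.I) (i3 := t) hf0 hΩ z hz
  have h2 := Wd_comm2 (c1 := Complex.I) (i1 := t) (c2 := -Complex.I) (i2 := s)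
    (c3 := Complex.I) (i3 := l) hf0 hΩ z hz
  have h3 := Wd_congr_on (c := -Complex.I) (i := s) hΩ
    (fun w hw => Wd_swap (c := Complex.I) (d := Complex.I) (i := t) (j := l) hf0 hΩ w hw) z hz
  rw [h1, h2]
  exact h3

omit hKE in
theorem eq3' (hz : z ∈ Ω) (k p r : Fin n) :
    Wd (-Complex.I) k (fun w => hessA u w r p) z
      = Wd (-Complex.I) r (fun w => hessA u w k p) z := by
  have hf0 : ContDiffOn ℝ (⊤ : ℕ∞) (cplx u) Ω := cplx_contDiffOn hu
  rw [hessA_entry u r p, hessA_entry u k p]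
  exact Wd_swap (Wd_contDiffOn hf0 hΩ) hΩ z hz

omit hKE in
theorem eq0' (hz : z ∈ Ω) (k l : Fin n) :
    Wd Complex.I l (Wd (-Complex.I) k (cplx u)) z = hessA u z k l := by
  have hf0 : ContDiffOn ℝ (⊤ : ℕ∞) (cplx u) Ω := cplx_contDiffOn hu
  have h : hessA u z k l = Wd (-Complex.I) k (Wd Complex.I l (cplx u)) z :=
    congrFun (hessA_entry u k l) z
  rw [h]
  exact Wd_swap hf0 hΩ z hz

end Uspecific
end KEaux

theorem laplacian_A_eq_AA (n : ℕ) (Ω : Set (Fin n → ℂ)) (hΩ : IsOpen Ω)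
    (u : (Fin n → ℂ) → ℝ) (hu : ContDiffOn ℝ (⊤ : ℕ∞) u Ω)
    (hpsh : ∀ z ∈ Ω, (hessA u z).PosDef)
    (hKE : ∀ z ∈ Ω, (hessA u z).det = (Real.exp ((n + 1) * u z) : ℂ)) :
    ∀ z ∈ Ω,
      ∑ i, ∑ j, uInv u z i j • mwdz (mwdzbar (hessA u) j) i z
        = (∑ i, ∑ j, uInv u z i j •
            (mwdz (hessA u) i z * (hessA u z)⁻¹ * mwdzbar (hessA u) j z))
          + ((n : ℂ) + 1) • hessA u z := by
  intro z hz
  have hf0 : ContDiffOn ℝ (⊤ : ℕ∞) (cplx u) Ω := KEaux.cplx_contDiffOn hu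
  ext k l
  simp only [uInv, mwdz, mwdzbar, Matrix.of_apply, KEaux.wdz_eq_W, KEaux.wdzbar_eq_W,
    Matrix.smul_apply, Matrix.sum_apply, Matrix.add_apply, smul_eq_mul]
  calc ∑ i, ∑ j, (hessA u z)⁻¹ j i
        * KEaux.Wd (-Complex.I) i (KEaux.Wd Complex.I j (fun w => hessA u w k l)) z
      = ∑ p, ∑ r, (hessA u z)⁻¹ p r
          * KEaux.Wd Complex.I l (KEaux.Wd (-Complex.I) k (fun w => hessA u w r p)) z := by
        rw [Finset.sum_comm]
        refine Finset.sum_congr rfl fun p _ => Finset.sum_congr rfl fun r _ => ?_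
        congr 1
        exact (KEaux.eqT1 hu hΩ hz k l r p).symm
    _ = (∑ p, ∑ r,
          ((hessA u z)⁻¹
            * (Matrix.of fun s t => KEaux.Wd Complex.I l (fun w => hessA u w s t) z)
            * (hessA u z)⁻¹) p r * KEaux.Wd (-Complex.I) k (fun w => hessA u w r p) z)
        + ((n : ℂ) + 1) * KEaux.Wd Complex.I l (KEaux.Wd (-Complex.I) k (cplx u)) z :=
        KEaux.second_deriv_KE hu hΩ hKE k l hz
    _ = (∑ i, ∑ j, (hessA u z)⁻¹ j i *
          (((Matrix.of fun p q => KEaux.Wd (-Complex.I) i (fun w => hessA u w p q) z)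
            * (hessA u z)⁻¹
            * (Matrix.of fun p q => KEaux.Wd Complex.I j (fun w => hessA u w p q) z)) k l))
        + ((n : ℂ) + 1) * hessA u z k l := by
        congr 1
        · calc ∑ p, ∑ r,
              ((hessA u z)⁻¹
                * (Matrix.of fun s t => KEaux.Wd Complex.I l (fun w => hessA u w s t) z)
                * (hessA u z)⁻¹) p r * KEaux.Wd (-Complex.I) k (fun w => hessA u w r p) z
              = ∑ p, ∑ r,
                  (∑ t, (∑ s, (hessA u z)⁻¹ p s
                      * KEaux.Wd Complex.I t (fun w => hessA u w s l) z)
                    * (hessA u z)⁻¹ t r)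
                  * KEaux.Wd (-Complex.I) r (fun w => hessA u w k p) z := by
                refine Finset.sum_congr rfl fun p _ => Finset.sum_congr rfl fun r _ => ?_
                rw [KEaux.eq3' hu hΩ hz k p r]
                congr 1
                rw [Matrix.mul_apply]
                refine Finset.sum_congr rfl fun t _ => ?_
                congr 1
                rw [Matrix.mul_apply]
                refine Finset.sum_congr rfl fun x _ => ?_
                congr 1
                exact KEaux.eq2' hu hΩ hz l x t
            _ = ∑ r, ∑ t, (hessA u z)⁻¹ t r
                  * (∑ x, (∑ y, KEaux.Wd (-Complex.I) r (fun w => hessA u w k y) z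
                      * (hessA u z)⁻¹ y x)
                    * KEaux.Wd Complex.I t (fun w => hessA u w x l) z) :=
              KEaux.sum4_comm (fun a b => (hessA u z)⁻¹ a b)
                (fun s t => KEaux.Wd Complex.I t (fun w => hessA u w s l) z)
                (fun r y => KEaux.Wd (-Complex.I) r (fun w => hessA u w k y) z)
            _ = ∑ i, ∑ j, (hessA u z)⁻¹ j i *
                  (((Matrix.of fun p q => KEaux.Wd (-Complex.I) i (fun w => hessA u w p q) z)
                    * (hessA u z)⁻¹
                    * (Matrix.of fun p q => KEaux.Wd Complex.I j (fun w => hessA u w p q) z)) k l) := by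
                refine Finset.sum_congr rfl fun r _ => Finset.sum_congr rfl fun t _ => ?_
                simp [Matrix.mul_apply]
        · rw [KEaux.eq0' hu hΩ hz k l]

end
end

section
/- Let u be a smooth strictly plurisubharmonic function on an open set Ω ⊆ ℂ^n satisfying det(u_{ij̄}) = e^{(n+1)u} on Ω, and set A = (u_{ij̄}), B = (u_{ij}). Then, as an identity of n×n matrix-valued functions on Ω, u^{ij̄} ∂_i∂_{j̄} B = u^{ij̄} (∂_i A)·A⁻¹·(∂_{j̄} B) + (n+1)B (summation over i, j). -/
open Complex Matrix
open scoped ComplexOrder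

noncomputable section

namespace CY
variable {n : ℕ}

/-- directional derivative -/
def dd (v : Fin n → ℂ) (f : (Fin n → ℂ) → ℂ) (z : Fin n → ℂ) : ℂ := fderiv ℝ f z v

lemma dd_congr {Ω : Set (Fin n → ℂ)} (hΩ : IsOpen Ω) {f g : (Fin n → ℂ) → ℂ}
    (h : ∀ w ∈ Ω, f w = g w) {z : Fin n → ℂ} (hz : z ∈ Ω) (v : Fin n → ℂ) :
    dd v f z = dd v g z := by
  unfold dd
  rw [Filter.EventuallyEq.fderiv_eq (Filter.eventually_of_mem (hΩ.mem_nhds hz) h)]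

lemma dd_add {f g : (Fin n → ℂ) → ℂ} {z : Fin n → ℂ} (hf : DifferentiableAt ℝ f z)
    (hg : DifferentiableAt ℝ g z) (v : Fin n → ℂ) :
    dd v (fun w => f w + g w) z = dd v f z + dd v g z := by
  unfold dd; rw [fderiv_fun_add hf hg]; simp

lemma dd_const (c : ℂ) (z v : Fin n → ℂ) : dd v (fun _ => c) z = 0 := by
  unfold dd; rw [fderiv_fun_const]; simp

lemma dd_const_mul {f : (Fin n → ℂ) → ℂ} {z : Fin n → ℂ} (hf : DifferentiableAt ℝ f z)
    (c : ℂ) (v : Fin n → ℂ) :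
    dd v (fun w => c * f w) z = c * dd v f z := by
  unfold dd; rw [fderiv_const_mul hf]; simp

lemma dd_mul {f g : (Fin n → ℂ) → ℂ} {z : Fin n → ℂ} (hf : DifferentiableAt ℝ f z)
    (hg : DifferentiableAt ℝ g z) (v : Fin n → ℂ) :
    dd v (fun w => f w * g w) z = dd v f z * g z + f z * dd v g z := by
  unfold dd; rw [fderiv_fun_mul hf hg]; simp; ring

lemma dd_sum {ι : Type*} {s : Finset ι} {f : ι → (Fin n → ℂ) → ℂ} {z : Fin n → ℂ}
    (hf : ∀ i ∈ s, DifferentiableAt ℝ (f i) z) (v : Fin n → ℂ) :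
    dd v (fun w => ∑ i ∈ s, f i w) z = ∑ i ∈ s, dd v (f i) z := by
  unfold dd; rw [fderiv_fun_sum hf]; simp

lemma dd_cexp {f : (Fin n → ℂ) → ℂ} {z : Fin n → ℂ} (hf : DifferentiableAt ℝ f z)
    (v : Fin n → ℂ) :
    dd v (fun w => Complex.exp (f w)) z = Complex.exp (f z) * dd v f z := by
  unfold dd
  have h1 : HasFDerivAt (fun w => Complex.exp (f w))
      (Complex.exp (f z) • (fderiv ℝ f z)) z := by
    exact hf.hasFDerivAt.cexp
  rw [h1.fderiv]; simp

lemma dd_prod {ι : Type*} [DecidableEq ι] {s : Finset ι} {f : ι → (Fin n → ℂ) → ℂ}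
    {z : Fin n → ℂ} (hf : ∀ i ∈ s, DifferentiableAt ℝ (f i) z) (v : Fin n → ℂ) :
    dd v (fun w => ∏ i ∈ s, f i w) z
      = ∑ i ∈ s, (∏ j ∈ s.erase i, f j z) * dd v (f i) z := by
  unfold dd
  have h := HasFDerivAt.finset_prod (u := s) (g := f)
    (g' := fun i => fderiv ℝ (f i) z) (fun i hi => (hf i hi).hasFDerivAt)
  rw [h.fderiv]
  simp

lemma smooth_dd {f : (Fin n → ℂ) → ℂ} {z : Fin n → ℂ}
    (hf : ContDiffAt ℝ (⊤ : ℕ∞) f z) (v : Fin n → ℂ) :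
    ContDiffAt ℝ (⊤ : ℕ∞) (dd v f) z := by
  have h1 : ContDiffAt ℝ (⊤ : ℕ∞) (fderiv ℝ f) z := by
    apply hf.fderiv_right
    simp
  exact h1.clm_apply contDiffAt_const

lemma diffAt_of_smooth {f : (Fin n → ℂ) → ℂ} {z : Fin n → ℂ}
    (hf : ContDiffAt ℝ (⊤ : ℕ∞) f z) : DifferentiableAt ℝ f z :=
  hf.differentiableAt (by simp)

lemma dd_comm {f : (Fin n → ℂ) → ℂ} {z : Fin n → ℂ}
    (hf : ContDiffAt ℝ (⊤ : ℕ∞) f z) (v w : Fin n → ℂ) :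
    dd v (dd w f) z = dd w (dd v f) z := by
  have hd : DifferentiableAt ℝ (fderiv ℝ f) z :=
    (hf.fderiv_right (m := (⊤:ℕ∞)) (by simp)).differentiableAt (by simp)
  have key : ∀ a b : Fin n → ℂ, dd a (dd b f) z = fderiv ℝ (fderiv ℝ f) z a b := by
    intro a b
    unfold dd
    rw [fderiv_clm_apply hd (differentiableAt_const b)]
    simp
  rw [key, key]
  exact (hf.isSymmSndFDerivAt (by
    rw [minSmoothness_of_isRCLikeNormedField]
    rw [show ((2:WithTop ℕ∞)) = (((2:ℕ∞)):WithTop ℕ∞) by rfl]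
    exact WithTop.coe_le_coe.2 (le_top : (2:ℕ∞) ≤ ⊤))).eq v w

/-! wdz layer -/

lemma wdz_eq (f : (Fin n → ℂ) → ℂ) (j : Fin n) (z : Fin n → ℂ) :
    wdz f j z = (dd (Pi.single j 1) f z - Complex.I * dd (Pi.single j Complex.I) f z) / 2 := rfl

lemma wdzbar_eq (f : (Fin n → ℂ) → ℂ) (j : Fin n) (z : Fin n → ℂ) :
    wdzbar f j z = (dd (Pi.single j 1) f z + Complex.I * dd (Pi.single j Complex.I) f z) / 2 := rfl

lemma wdz_congr {Ω : Set (Fin n → ℂ)} (hΩ : IsOpen Ω) {f g : (Fin n → ℂ) → ℂ}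
    (h : ∀ w ∈ Ω, f w = g w) {z : Fin n → ℂ} (hz : z ∈ Ω) (j : Fin n) :
    wdz f j z = wdz g j z := by
  rw [wdz_eq, wdz_eq, dd_congr hΩ h hz, dd_congr hΩ h hz]

lemma wdzbar_congr {Ω : Set (Fin n → ℂ)} (hΩ : IsOpen Ω) {f g : (Fin n → ℂ) → ℂ}
    (h : ∀ w ∈ Ω, f w = g w) {z : Fin n → ℂ} (hz : z ∈ Ω) (j : Fin n) :
    wdzbar f j z = wdzbar g j z := by
  rw [wdzbar_eq, wdzbar_eq, dd_congr hΩ h hz, dd_congr hΩ h hz]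

lemma smooth_wdz {f : (Fin n → ℂ) → ℂ} {z : Fin n → ℂ}
    (hf : ContDiffAt ℝ (⊤ : ℕ∞) f z) (j : Fin n) :
    ContDiffAt ℝ (⊤ : ℕ∞) (wdz f j) z := by
  have : wdz f j = fun z => (dd (Pi.single j 1) f z
      - Complex.I * dd (Pi.single j Complex.I) f z) / 2 := rfl
  rw [this]
  exact ((smooth_dd hf _).sub (contDiffAt_const.mul (smooth_dd hf _))).div_const 2

lemma smooth_wdzbar {f : (Fin n → ℂ) → ℂ} {z : Fin n → ℂ}
    (hf : ContDiffAt ℝ (⊤ : ℕ∞) f z) (j : Fin n) :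
    ContDiffAt ℝ (⊤ : ℕ∞) (wdzbar f j) z := by
  have : wdzbar f j = fun z => (dd (Pi.single j 1) f z
      + Complex.I * dd (Pi.single j Complex.I) f z) / 2 := rfl
  rw [this]
  exact ((smooth_dd hf _).add (contDiffAt_const.mul (smooth_dd hf _))).div_const 2

lemma dd_comb {g1 g2 : (Fin n → ℂ) → ℂ} {z : Fin n → ℂ}
    (h1 : DifferentiableAt ℝ g1 z) (h2 : DifferentiableAt ℝ g2 z) (c : ℂ) (v : Fin n → ℂ) :
    dd v (fun w => (g1 w + c * g2 w) / 2) z = (dd v g1 z + c * dd v g2 z) / 2 := by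
  have e : (fun w => (g1 w + c * g2 w) / 2)
      = fun w => (1/2 : ℂ) * g1 w + (c/2) * g2 w := by
    funext w; ring
  rw [e, dd_add ((h1.const_mul _)) ((h2.const_mul _)),
    dd_const_mul h1, dd_const_mul h2]
  ring

lemma dd_wdz {f : (Fin n → ℂ) → ℂ} {z : Fin n → ℂ}
    (hf : ContDiffAt ℝ (⊤ : ℕ∞) f z) (v : Fin n → ℂ) (j : Fin n) :
    dd v (wdz f j) z = (dd v (dd (Pi.single j 1) f) z
      - Complex.I * dd v (dd (Pi.single j Complex.I) f) z) / 2 := by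
  have e : wdz f j = fun w => (dd (Pi.single j 1) f w
      + (-Complex.I) * dd (Pi.single j Complex.I) f w) / 2 := by
    funext w; rw [wdz_eq]; ring
  rw [e, dd_comb (diffAt_of_smooth (smooth_dd hf _)) (diffAt_of_smooth (smooth_dd hf _))]
  ring

lemma dd_wdzbar {f : (Fin n → ℂ) → ℂ} {z : Fin n → ℂ}
    (hf : ContDiffAt ℝ (⊤ : ℕ∞) f z) (v : Fin n → ℂ) (j : Fin n) :
    dd v (wdzbar f j) z = (dd v (dd (Pi.single j 1) f) z
      + Complex.I * dd v (dd (Pi.single j Complex.I) f) z) / 2 := by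
  have e : wdzbar f j = fun w => (dd (Pi.single j 1) f w
      + Complex.I * dd (Pi.single j Complex.I) f w) / 2 := by
    funext w; rw [wdzbar_eq]
  rw [e, dd_comb (diffAt_of_smooth (smooth_dd hf _)) (diffAt_of_smooth (smooth_dd hf _))]

lemma wdz_wdz_comm {f : (Fin n → ℂ) → ℂ} {z : Fin n → ℂ}
    (hf : ContDiffAt ℝ (⊤ : ℕ∞) f z) (p q : Fin n) :
    wdz (wdz f q) p z = wdz (wdz f p) q z := by
  rw [wdz_eq (wdz f q), wdz_eq (wdz f p), dd_wdz hf, dd_wdz hf, dd_wdz hf, dd_wdz hf,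
    dd_comm hf (Pi.single p 1) (Pi.single q 1),
    dd_comm hf (Pi.single p 1) (Pi.single q Complex.I),
    dd_comm hf (Pi.single p Complex.I) (Pi.single q 1),
    dd_comm hf (Pi.single p Complex.I) (Pi.single q Complex.I)]
  ring

lemma wdz_wdzbar_comm {f : (Fin n → ℂ) → ℂ} {z : Fin n → ℂ}
    (hf : ContDiffAt ℝ (⊤ : ℕ∞) f z) (i j : Fin n) :
    wdz (wdzbar f j) i z = wdzbar (wdz f i) j z := by
  rw [wdz_eq (wdzbar f j), wdzbar_eq (wdz f i), dd_wdzbar hf, dd_wdzbar hf,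
    dd_wdz hf, dd_wdz hf,
    dd_comm hf (Pi.single i 1) (Pi.single j 1),
    dd_comm hf (Pi.single i 1) (Pi.single j Complex.I),
    dd_comm hf (Pi.single i Complex.I) (Pi.single j 1),
    dd_comm hf (Pi.single i Complex.I) (Pi.single j Complex.I)]
  ring

lemma wdz_add {f g : (Fin n → ℂ) → ℂ} {z : Fin n → ℂ} (hf : DifferentiableAt ℝ f z)
    (hg : DifferentiableAt ℝ g z) (j : Fin n) :
    wdz (fun w => f w + g w) j z = wdz f j z + wdz g j z := by
  rw [wdz_eq, wdz_eq, wdz_eq, dd_add hf hg, dd_add hf hg]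
  ring

lemma wdz_const_mul {f : (Fin n → ℂ) → ℂ} {z : Fin n → ℂ} (hf : DifferentiableAt ℝ f z)
    (c : ℂ) (j : Fin n) :
    wdz (fun w => c * f w) j z = c * wdz f j z := by
  rw [wdz_eq, wdz_eq, dd_const_mul hf, dd_const_mul hf]
  ring

lemma wdz_mul {f g : (Fin n → ℂ) → ℂ} {z : Fin n → ℂ} (hf : DifferentiableAt ℝ f z)
    (hg : DifferentiableAt ℝ g z) (j : Fin n) :
    wdz (fun w => f w * g w) j z = wdz f j z * g z + f z * wdz g j z := by
  rw [wdz_eq, wdz_eq, wdz_eq, dd_mul hf hg, dd_mul hf hg]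
  ring

lemma wdz_sum {ι : Type*} {s : Finset ι} {f : ι → (Fin n → ℂ) → ℂ} {z : Fin n → ℂ}
    (hf : ∀ i ∈ s, DifferentiableAt ℝ (f i) z) (j : Fin n) :
    wdz (fun w => ∑ i ∈ s, f i w) j z = ∑ i ∈ s, wdz (f i) j z := by
  rw [wdz_eq, dd_sum hf, dd_sum hf]
  rw [Finset.mul_sum, ← Finset.sum_sub_distrib, Finset.sum_div]
  exact Finset.sum_congr rfl fun i _ => by rw [wdz_eq]

lemma wdz_prod {ι : Type*} [DecidableEq ι] {s : Finset ι} {f : ι → (Fin n → ℂ) → ℂ}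
    {z : Fin n → ℂ} (hf : ∀ i ∈ s, DifferentiableAt ℝ (f i) z) (j : Fin n) :
    wdz (fun w => ∏ i ∈ s, f i w) j z
      = ∑ i ∈ s, (∏ k ∈ s.erase i, f k z) * wdz (f i) j z := by
  rw [wdz_eq, dd_prod hf, dd_prod hf]
  rw [Finset.mul_sum, ← Finset.sum_sub_distrib, Finset.sum_div]
  refine Finset.sum_congr rfl fun i _ => ?_
  rw [wdz_eq]
  ring

lemma wdz_cexp {f : (Fin n → ℂ) → ℂ} {z : Fin n → ℂ} (hf : DifferentiableAt ℝ f z)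
    (j : Fin n) :
    wdz (fun w => Complex.exp (f w)) j z = Complex.exp (f z) * wdz f j z := by
  rw [wdz_eq, wdz_eq, dd_cexp hf, dd_cexp hf]
  ring


lemma wdz_const (c : ℂ) (j : Fin n) (z : Fin n → ℂ) : wdz (fun _ => c) j z = 0 := by
  rw [wdz_eq, dd_const, dd_const]
  simp

/-! determinant layer -/

lemma smooth_det {M : (Fin n → ℂ) → Matrix (Fin n) (Fin n) ℂ} {z : Fin n → ℂ}
    (hM : ∀ p q, ContDiffAt ℝ (⊤ : ℕ∞) (fun w => M w p q) z) :
    ContDiffAt ℝ (⊤ : ℕ∞) (fun w => (M w).det) z := by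
  have e : (fun w => (M w).det)
      = fun w => ∑ σ : Equiv.Perm (Fin n),
          ((Equiv.Perm.sign σ : ℤ) : ℂ) * ∏ i, M w (σ i) i := by
    funext w
    rw [Matrix.det_apply']
  rw [e]
  exact ContDiffAt.sum fun σ _ =>
    contDiffAt_const.mul (contDiffAt_prod fun i _ => hM (σ i) i)

lemma det_row_expansion (N : Matrix (Fin n) (Fin n) ℂ) (p : Fin n) (r : Fin n → ℂ) :
    (N.updateRow p r).det = ∑ q, r q * adjugate N q p := by
  have h1 : (N.updateRow p r).det = cramer Nᵀ r p := (Matrix.cramer_transpose_apply N r p).symm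
  have h2 : r = ∑ q, r q • (Pi.single q 1 : Fin n → ℂ) := by
    funext t
    rw [Finset.sum_apply]
    simp [Pi.single_apply]
  rw [h1]
  conv_lhs => rw [h2]
  rw [map_sum]
  rw [Finset.sum_apply]
  refine Finset.sum_congr rfl fun q _ => ?_
  rw [LinearMap.map_smul]
  simp [Matrix.adjugate_apply, Matrix.cramer_transpose_apply, mul_comm]

lemma jacobi_alg (N D : Matrix (Fin n) (Fin n) ℂ) :
    ∑ σ : Equiv.Perm (Fin n), (Equiv.Perm.sign σ : ℂ) *
        ∑ i, (∏ k ∈ Finset.univ.erase i, N (σ k) k) * D (σ i) i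
      = ∑ p, ∑ r, adjugate N r p * D p r := by
  have rhs1 : ∀ p : Fin n, ∑ r, adjugate N r p * D p r
      = (N.updateRow p (D p)).det := by
    intro p
    rw [det_row_expansion]
    exact Finset.sum_congr rfl fun q _ => by ring
  calc ∑ σ : Equiv.Perm (Fin n), (Equiv.Perm.sign σ : ℂ) *
        ∑ i, (∏ k ∈ Finset.univ.erase i, N (σ k) k) * D (σ i) i
      = ∑ σ : Equiv.Perm (Fin n), ∑ i, (Equiv.Perm.sign σ : ℂ) *
          ((∏ k ∈ Finset.univ.erase i, N (σ k) k) * D (σ i) i) := by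
        exact Finset.sum_congr rfl fun σ _ => Finset.mul_sum _ _ _
    _ = ∑ i, ∑ σ : Equiv.Perm (Fin n), (Equiv.Perm.sign σ : ℂ) *
          ((∏ k ∈ Finset.univ.erase i, N (σ k) k) * D (σ i) i) := Finset.sum_comm
    _ = ∑ i, ∑ σ : Equiv.Perm (Fin n),
          (Equiv.Perm.sign σ : ℂ) * ∏ k, (N.updateRow (σ i) (D (σ i))) (σ k) k := by
        refine Finset.sum_congr rfl fun i _ => Finset.sum_congr rfl fun σ _ => ?_
        congr 1
        rw [← Finset.prod_erase_mul Finset.univ _ (Finset.mem_univ i)]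
        congr 1
        · refine Finset.prod_congr rfl fun k hk => ?_
          have hk' : k ≠ i := (Finset.mem_erase.mp hk).1
          rw [Matrix.updateRow_ne (σ.injective.ne hk')]
        · rw [Matrix.updateRow_self]
    _ = ∑ σ : Equiv.Perm (Fin n), ∑ p,
          (Equiv.Perm.sign σ : ℂ) * ∏ k, (N.updateRow p (D p)) (σ k) k := by
        rw [Finset.sum_comm]
        exact Finset.sum_congr rfl fun σ _ => Equiv.sum_comp σ
          (fun p => (Equiv.Perm.sign σ : ℂ) * ∏ k, (N.updateRow p (D p)) (σ k) k)
    _ = ∑ p, ∑ σ : Equiv.Perm (Fin n),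
          (Equiv.Perm.sign σ : ℂ) * ∏ k, (N.updateRow p (D p)) (σ k) k := Finset.sum_comm
    _ = ∑ p, (N.updateRow p (D p)).det :=
        Finset.sum_congr rfl fun p _ => (Matrix.det_apply' _).symm
    _ = ∑ p, ∑ r, adjugate N r p * D p r := Finset.sum_congr rfl fun p _ => (rhs1 p).symm

lemma wdz_det {M : (Fin n → ℂ) → Matrix (Fin n) (Fin n) ℂ} {z : Fin n → ℂ}
    (hM : ∀ p q, DifferentiableAt ℝ (fun w => M w p q) z) (j : Fin n) :
    wdz (fun w => (M w).det) j z
      = ∑ p, ∑ r, adjugate (M z) r p * wdz (fun w => M w p r) j z := by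
  have e : (fun w => (M w).det) = fun w => ∑ σ : Equiv.Perm (Fin n),
      ((Equiv.Perm.sign σ : ℤ) : ℂ) * ∏ i, M w (σ i) i := by
    funext w; rw [Matrix.det_apply']
  have hdP : ∀ σ : Equiv.Perm (Fin n),
      DifferentiableAt ℝ (fun w => ∏ i, M w (σ i) i) z := fun σ =>
    (HasFDerivAt.finset_prod fun i _ => (hM (σ i) i).hasFDerivAt).differentiableAt
  rw [e, wdz_sum (fun σ _ => (hdP σ).const_mul _) j]
  have step : ∀ σ : Equiv.Perm (Fin n),
      wdz (fun w => ((Equiv.Perm.sign σ : ℤ) : ℂ) * ∏ i, M w (σ i) i) j z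
        = ((Equiv.Perm.sign σ : ℤ) : ℂ) * ∑ i, (∏ k ∈ Finset.univ.erase i, M z (σ k) k)
            * wdz (fun w => M w (σ i) i) j z := by
    intro σ
    rw [wdz_const_mul (hdP σ), wdz_prod (fun i _ => hM (σ i) i)]
  rw [Finset.sum_congr rfl fun σ _ => step σ]
  have h2 := jacobi_alg (M z) (Matrix.of fun p r => wdz (fun w => M w p r) j z)
  simp only [Matrix.of_apply] at h2
  convert h2 using 3

/-! context layer -/

section Main
variable {Ω : Set (Fin n → ℂ)} {u : (Fin n → ℂ) → ℝ}

lemma smooth_g (hΩ : IsOpen Ω) (hu : ContDiffOn ℝ (⊤ : ℕ∞) u Ω) :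
    ∀ z ∈ Ω, ContDiffAt ℝ (⊤ : ℕ∞) (cplx u) z := by
  intro z hz
  have h1 : ContDiffAt ℝ (⊤ : ℕ∞) u z := (hu z hz).contDiffAt (hΩ.mem_nhds hz)
  exact (Complex.ofRealCLM.contDiff.contDiffAt).comp z h1

lemma smooth_aentry (hΩ : IsOpen Ω) (hu : ContDiffOn ℝ (⊤ : ℕ∞) u Ω) (i j : Fin n) :
    ∀ z ∈ Ω, ContDiffAt ℝ (⊤ : ℕ∞) (fun w => hessA u w i j) z :=
  fun z hz => smooth_wdz (smooth_wdzbar (smooth_g hΩ hu z hz) j) i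

lemma smooth_bentry (hΩ : IsOpen Ω) (hu : ContDiffOn ℝ (⊤ : ℕ∞) u Ω) (p q : Fin n) :
    ∀ z ∈ Ω, ContDiffAt ℝ (⊤ : ℕ∞) (fun w => hessB u w p q) z :=
  fun z hz => smooth_wdz (smooth_wdz (smooth_g hΩ hu z hz) q) p

lemma smooth_detA (hΩ : IsOpen Ω) (hu : ContDiffOn ℝ (⊤ : ℕ∞) u Ω) :
    ∀ z ∈ Ω, ContDiffAt ℝ (⊤ : ℕ∞) (fun w => (hessA u w).det) z :=
  fun z hz => smooth_det (fun p q => smooth_aentry hΩ hu p q z hz)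

lemma detA_ne {z : Fin n → ℂ}
    (hKE : ∀ z ∈ Ω, (hessA u z).det = (Real.exp ((n + 1) * u z) : ℂ)) (hz : z ∈ Ω) :
    (hessA u z).det ≠ 0 := by
  rw [hKE z hz]
  exact Complex.ofReal_ne_zero.mpr (Real.exp_ne_zero _)

lemma smooth_inv_entry (hΩ : IsOpen Ω) (hu : ContDiffOn ℝ (⊤ : ℕ∞) u Ω)
    (hKE : ∀ z ∈ Ω, (hessA u z).det = (Real.exp ((n + 1) * u z) : ℂ)) (s t : Fin n) :
    ∀ z ∈ Ω, ContDiffAt ℝ (⊤ : ℕ∞) (fun w => (hessA u w)⁻¹ s t) z := by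
  intro z hz
  have e : (fun w => (hessA u w)⁻¹ s t)
      = fun w => ((hessA u w).det)⁻¹ * (hessA u w).adjugate s t := by
    funext w
    rw [Matrix.inv_def, Matrix.smul_apply, Ring.inverse_eq_inv, smul_eq_mul]
  rw [e]
  refine ((smooth_detA hΩ hu z hz).inv (detA_ne hKE hz)).mul ?_
  have e2 : (fun w => (hessA u w).adjugate s t)
      = fun w => (((hessA u w).updateRow t (Pi.single s 1))).det := by
    funext w; rw [Matrix.adjugate_apply]
  rw [e2]
  apply smooth_det
  intro p q
  by_cases hp : p = t
  · subst hp
    have e3 : (fun w => ((hessA u w).updateRow p (Pi.single s 1)) p q)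
        = fun _ => (Pi.single s (1:ℂ) : Fin n → ℂ) q := by
      funext w; rw [Matrix.updateRow_self]
    rw [e3]; exact contDiffAt_const
  · have e3 : (fun w => ((hessA u w).updateRow t (Pi.single s 1)) p q)
        = fun w => hessA u w p q := by
      funext w; rw [Matrix.updateRow_ne hp]
    rw [e3]; exact smooth_aentry hΩ hu p q z hz

lemma first_order (hΩ : IsOpen Ω) (hu : ContDiffOn ℝ (⊤ : ℕ∞) u Ω)
    (hKE : ∀ z ∈ Ω, (hessA u z).det = (Real.exp ((n + 1) * u z) : ℂ))
    (q : Fin n) {z : Fin n → ℂ} (hz : z ∈ Ω) :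
    ∑ i, ∑ j, (hessA u z)⁻¹ j i * wdz (fun w => hessA u w i j) q z
      = ((n : ℂ) + 1) * wdz (cplx u) q z := by
  have hdet := detA_ne hKE hz
  have hJ := wdz_det (M := hessA u) (z := z)
    (fun p r => diffAt_of_smooth (smooth_aentry hΩ hu p r z hz)) q
  have hEq : ∀ w ∈ Ω, (hessA u w).det = Complex.exp (((n : ℂ) + 1) * cplx u w) := by
    intro w hw
    rw [hKE w hw, Complex.ofReal_exp]
    unfold cplx
    push_cast
    ring_nf
  have hg := smooth_g hΩ hu z hz
  have hL : wdz (fun w => (hessA u w).det) q z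
      = (hessA u z).det * (((n : ℂ) + 1) * wdz (cplx u) q z) := by
    rw [wdz_congr hΩ hEq hz q]
    have hd : DifferentiableAt ℝ (fun w => ((n : ℂ) + 1) * cplx u w) z :=
      (diffAt_of_smooth hg).const_mul _
    rw [wdz_cexp hd q, wdz_const_mul (diffAt_of_smooth hg) _ q, ← hEq z hz]
  have key : ∑ p, ∑ r, adjugate (hessA u z) r p * wdz (fun w => hessA u w p r) q z
      = (hessA u z).det * (((n : ℂ) + 1) * wdz (cplx u) q z) := by rw [← hJ, hL]
  have inv_eq : ∀ j i : Fin n, (hessA u z)⁻¹ j i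
      = ((hessA u z).det)⁻¹ * adjugate (hessA u z) j i := by
    intro j i; rw [Matrix.inv_def, Matrix.smul_apply, Ring.inverse_eq_inv, smul_eq_mul]
  calc ∑ i, ∑ j, (hessA u z)⁻¹ j i * wdz (fun w => hessA u w i j) q z
      = ((hessA u z).det)⁻¹
          * ∑ i, ∑ j, adjugate (hessA u z) j i * wdz (fun w => hessA u w i j) q z := by
        rw [Finset.mul_sum]
        refine Finset.sum_congr rfl fun i _ => ?_
        rw [Finset.mul_sum]
        exact Finset.sum_congr rfl fun j _ => by rw [inv_eq]; ring
    _ = ((hessA u z).det)⁻¹ * ((hessA u z).det * (((n : ℂ) + 1) * wdz (cplx u) q z)) := by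
        rw [key]
    _ = ((n : ℂ) + 1) * wdz (cplx u) q z := by field_simp

lemma inv_deriv (hΩ : IsOpen Ω) (hu : ContDiffOn ℝ (⊤ : ℕ∞) u Ω)
    (hKE : ∀ z ∈ Ω, (hessA u z).det = (Real.exp ((n + 1) * u z) : ℂ))
    (p : Fin n) {z : Fin n → ℂ} (hz : z ∈ Ω) (s t : Fin n) :
    wdz (fun w => (hessA u w)⁻¹ s t) p z
      = -∑ k, ∑ l, (hessA u z)⁻¹ s k * wdz (fun w => hessA u w k l) p z
          * (hessA u z)⁻¹ l t := by
  have hunit : IsUnit (hessA u z).det := isUnit_iff_ne_zero.mpr (detA_ne hKE hz)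
  set A := hessA u z with hA
  set X : Matrix (Fin n) (Fin n) ℂ :=
    Matrix.of fun a b => wdz (fun w => (hessA u w)⁻¹ a b) p z with hXdef
  set E : Matrix (Fin n) (Fin n) ℂ :=
    Matrix.of fun a b => wdz (fun w => hessA u w a b) p z with hEdef
  have scalar : ∀ a b : Fin n,
      ∑ k, (wdz (fun w => hessA u w a k) p z * (hessA u z)⁻¹ k b
        + hessA u z a k * wdz (fun w => (hessA u w)⁻¹ k b) p z) = 0 := by
    intro a b
    have hc : ∀ w ∈ Ω, (fun w => ∑ k, hessA u w a k * (hessA u w)⁻¹ k b) w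
        = (fun _ => (1 : Matrix (Fin n) (Fin n) ℂ) a b) w := by
      intro w hw
      have h1 : hessA u w * (hessA u w)⁻¹ = 1 :=
        Matrix.mul_nonsing_inv _ (isUnit_iff_ne_zero.mpr (detA_ne hKE hw))
      calc ∑ k, hessA u w a k * (hessA u w)⁻¹ k b
          = (hessA u w * (hessA u w)⁻¹) a b := (Matrix.mul_apply).symm
        _ = (1 : Matrix (Fin n) (Fin n) ℂ) a b := by rw [h1]
    have h0 : wdz (fun w => ∑ k, hessA u w a k * (hessA u w)⁻¹ k b) p z = 0 := by
      rw [wdz_congr hΩ hc hz p, wdz_const]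
    rw [← h0]
    rw [wdz_sum (fun k _ => ((diffAt_of_smooth (smooth_aentry hΩ hu a k z hz)).fun_mul
      (diffAt_of_smooth (smooth_inv_entry hΩ hu hKE k b z hz)))) p]
    exact (Finset.sum_congr rfl fun k _ => by
      rw [wdz_mul (diffAt_of_smooth (smooth_aentry hΩ hu a k z hz))
        (diffAt_of_smooth (smooth_inv_entry hΩ hu hKE k b z hz))]).symm
  have hm : E * A⁻¹ + A * X = 0 := by
    ext a b
    have := scalar a b
    rw [Finset.sum_add_distrib] at this
    simpa [Matrix.add_apply, Matrix.mul_apply, hXdef, hEdef, Matrix.of_apply] using this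
  have hAX : A * X = -(E * A⁻¹) := eq_neg_of_add_eq_zero_right hm
  have hXval : X = -(A⁻¹ * E * A⁻¹) := by
    calc X = 1 * X := (one_mul X).symm
      _ = (A⁻¹ * A) * X := by rw [Matrix.nonsing_inv_mul A hunit]
      _ = A⁻¹ * (A * X) := by rw [Matrix.mul_assoc]
      _ = A⁻¹ * -(E * A⁻¹) := by rw [hAX]
      _ = -(A⁻¹ * E * A⁻¹) := by rw [Matrix.mul_neg, Matrix.mul_assoc]
  have hfin : X s t = -((A⁻¹ * E * A⁻¹) s t) := by rw [hXval]; simp [Matrix.neg_apply]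
  have expand : (A⁻¹ * E * A⁻¹) s t
      = ∑ k, ∑ l, (hessA u z)⁻¹ s k * wdz (fun w => hessA u w k l) p z
          * (hessA u z)⁻¹ l t := by
    calc (A⁻¹ * E * A⁻¹) s t = ∑ l, (A⁻¹ * E) s l * A⁻¹ l t := Matrix.mul_apply
      _ = ∑ l, ∑ k, A⁻¹ s k * E k l * A⁻¹ l t := by
          refine Finset.sum_congr rfl fun l _ => ?_
          rw [Matrix.mul_apply, Finset.sum_mul]
      _ = ∑ k, ∑ l, A⁻¹ s k * E k l * A⁻¹ l t := Finset.sum_comm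
      _ = ∑ k, ∑ l, (hessA u z)⁻¹ s k * wdz (fun w => hessA u w k l) p z
          * (hessA u z)⁻¹ l t := rfl
  show X s t = _
  rw [hfin, expand]

lemma second_order (hΩ : IsOpen Ω) (hu : ContDiffOn ℝ (⊤ : ℕ∞) u Ω)
    (hKE : ∀ z ∈ Ω, (hessA u z).det = (Real.exp ((n + 1) * u z) : ℂ))
    (p q : Fin n) {z : Fin n → ℂ} (hz : z ∈ Ω) :
    ∑ i, ∑ j, (hessA u z)⁻¹ j i * wdz (wdz (fun w' => hessA u w' i j) q) p z
      = (∑ i, ∑ j, ∑ k, ∑ l, (hessA u z)⁻¹ j k * wdz (fun w => hessA u w k l) p z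
          * (hessA u z)⁻¹ l i * wdz (fun w => hessA u w i j) q z)
        + ((n : ℂ) + 1) * wdz (wdz (cplx u) q) p z := by
  have hdiffInv : ∀ a b : Fin n, DifferentiableAt ℝ (fun w => (hessA u w)⁻¹ a b) z :=
    fun a b => diffAt_of_smooth (smooth_inv_entry hΩ hu hKE a b z hz)
  have hdiffDq : ∀ i j : Fin n, DifferentiableAt ℝ (wdz (fun w' => hessA u w' i j) q) z :=
    fun i j => diffAt_of_smooth (smooth_wdz (smooth_aentry hΩ hu i j z hz) q)
  have hdiffterm : ∀ i j : Fin n, DifferentiableAt ℝ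
      (fun w => (hessA u w)⁻¹ j i * wdz (fun w' => hessA u w' i j) q w) z :=
    fun i j => (hdiffInv j i).mul (hdiffDq i j)
  have hFG : ∀ w ∈ Ω,
      ∑ i, ∑ j, (hessA u w)⁻¹ j i * wdz (fun w' => hessA u w' i j) q w
        = ((n : ℂ) + 1) * wdz (cplx u) q w :=
    fun w hw => first_order hΩ hu hKE q hw
  have hcong := wdz_congr hΩ
    (f := fun w => ∑ i, ∑ j, (hessA u w)⁻¹ j i * wdz (fun w' => hessA u w' i j) q w)
    (g := fun w => ((n : ℂ) + 1) * wdz (cplx u) q w) hFG hz p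
  have hG : wdz (fun w => ((n : ℂ) + 1) * wdz (cplx u) q w) p z
      = ((n : ℂ) + 1) * wdz (wdz (cplx u) q) p z :=
    wdz_const_mul (diffAt_of_smooth (smooth_wdz (smooth_g hΩ hu z hz) q)) _ p
  have hF : wdz (fun w => ∑ i, ∑ j,
        (hessA u w)⁻¹ j i * wdz (fun w' => hessA u w' i j) q w) p z
      = ∑ i, ∑ j, (wdz (fun w => (hessA u w)⁻¹ j i) p z
            * wdz (fun w' => hessA u w' i j) q z
          + (hessA u z)⁻¹ j i * wdz (wdz (fun w' => hessA u w' i j) q) p z) := by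
    rw [wdz_sum (fun i _ => DifferentiableAt.fun_sum fun j _ => hdiffterm i j) p]
    refine Finset.sum_congr rfl fun i _ => ?_
    rw [wdz_sum (fun j _ => hdiffterm i j) p]
    exact Finset.sum_congr rfl fun j _ => wdz_mul (hdiffInv j i) (hdiffDq i j) p
  have hsplit : ∑ i, ∑ j, (wdz (fun w => (hessA u w)⁻¹ j i) p z
        * wdz (fun w' => hessA u w' i j) q z
      + (hessA u z)⁻¹ j i * wdz (wdz (fun w' => hessA u w' i j) q) p z)
      = (∑ i, ∑ j, wdz (fun w => (hessA u w)⁻¹ j i) p z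
          * wdz (fun w' => hessA u w' i j) q z)
        + ∑ i, ∑ j, (hessA u z)⁻¹ j i * wdz (wdz (fun w' => hessA u w' i j) q) p z := by
    rw [← Finset.sum_add_distrib]
    exact Finset.sum_congr rfl fun i _ => Finset.sum_add_distrib
  have hS1 : ∑ i, ∑ j, wdz (fun w => (hessA u w)⁻¹ j i) p z
        * wdz (fun w' => hessA u w' i j) q z
      = -∑ i, ∑ j, ∑ k, ∑ l, (hessA u z)⁻¹ j k * wdz (fun w => hessA u w k l) p z
          * (hessA u z)⁻¹ l i * wdz (fun w => hessA u w i j) q z := by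
    rw [← Finset.sum_neg_distrib]
    refine Finset.sum_congr rfl fun i _ => ?_
    rw [← Finset.sum_neg_distrib]
    refine Finset.sum_congr rfl fun j _ => ?_
    rw [inv_deriv hΩ hu hKE p hz j i, neg_mul, neg_inj, Finset.sum_mul]
    refine Finset.sum_congr rfl fun k _ => ?_
    rw [Finset.sum_mul]
  rw [hF, hG, hsplit, hS1] at hcong
  linear_combination hcong

lemma mwdzA_entry (hΩ : IsOpen Ω) (hu : ContDiffOn ℝ (⊤ : ℕ∞) u Ω)
    (i : Fin n) {z : Fin n → ℂ} (hz : z ∈ Ω) (p k : Fin n) :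
    (mwdz (hessA u) i z) p k = wdz (fun w => hessA u w i k) p z := by
  show wdz (wdz (wdzbar (cplx u) k) p) i z = _
  rw [wdz_wdz_comm (smooth_wdzbar (smooth_g hΩ hu z hz) k) i p]
  rfl

lemma mwdzbarB_entry (hΩ : IsOpen Ω) (hu : ContDiffOn ℝ (⊤ : ℕ∞) u Ω)
    (j : Fin n) {z : Fin n → ℂ} (hz : z ∈ Ω) (l q : Fin n) :
    (mwdzbar (hessB u) j z) l q = wdz (fun w => hessA u w l j) q z := by
  show wdzbar (wdz (wdz (cplx u) q) l) j z = _
  rw [← wdz_wdzbar_comm (smooth_wdz (smooth_g hΩ hu z hz) q) l j]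
  rw [wdz_congr hΩ (f := wdzbar (wdz (cplx u) q) j) (g := wdz (wdzbar (cplx u) j) q)
    (fun w hw => (wdz_wdzbar_comm (smooth_g hΩ hu w hw) q j).symm) hz l]
  rw [wdz_wdz_comm (smooth_wdzbar (smooth_g hΩ hu z hz) j) l q]
  rfl

lemma lhs_entry (hΩ : IsOpen Ω) (hu : ContDiffOn ℝ (⊤ : ℕ∞) u Ω)
    (i j : Fin n) {z : Fin n → ℂ} (hz : z ∈ Ω) (p q : Fin n) :
    (mwdz (mwdzbar (hessB u) j) i z) p q
      = wdz (wdz (fun w' => hessA u w' i j) q) p z := by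
  show wdz (wdzbar (wdz (wdz (cplx u) q) p) j) i z = _
  have e : ∀ w ∈ Ω, wdzbar (wdz (wdz (cplx u) q) p) j w
      = wdz (wdz (wdzbar (cplx u) j) q) p w := by
    intro w hw
    rw [← wdz_wdzbar_comm (smooth_wdz (smooth_g hΩ hu w hw) q) p j]
    exact wdz_congr hΩ (f := wdzbar (wdz (cplx u) q) j) (g := wdz (wdzbar (cplx u) j) q)
      (fun w' hw' => (wdz_wdzbar_comm (smooth_g hΩ hu w' hw') q j).symm) hw p
  rw [wdz_congr hΩ (f := wdzbar (wdz (wdz (cplx u) q) p) j)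
    (g := wdz (wdz (wdzbar (cplx u) j) q) p) e hz i]
  rw [wdz_wdz_comm (smooth_wdz (smooth_wdzbar (smooth_g hΩ hu z hz) j) q) i p]
  rw [wdz_congr hΩ (f := wdz (wdz (wdzbar (cplx u) j) q) i)
    (g := wdz (wdz (wdzbar (cplx u) j) i) q)
    (fun w hw => wdz_wdz_comm (smooth_wdzbar (smooth_g hΩ hu w hw) j) i q) hz p]
  rfl

lemma sum4_perm (f : Fin n → Fin n → Fin n → Fin n → ℂ) :
    ∑ i, ∑ j, ∑ c, ∑ k, f c j i k = ∑ i, ∑ j, ∑ k, ∑ l, f i j k l :=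
  calc ∑ i, ∑ j, ∑ c, ∑ k, f c j i k
      = ∑ j, ∑ i, ∑ c, ∑ k, f c j i k := Finset.sum_comm
    _ = ∑ j, ∑ c, ∑ i, ∑ k, f c j i k :=
        Finset.sum_congr rfl fun j _ => Finset.sum_comm
    _ = ∑ c, ∑ j, ∑ i, ∑ k, f c j i k := Finset.sum_comm

end Main

end CY

set_option maxHeartbeats 1000000 in
theorem laplacian_B_eq_AB (n : ℕ) (Ω : Set (Fin n → ℂ)) (hΩ : IsOpen Ω)
    (u : (Fin n → ℂ) → ℝ) (hu : ContDiffOn ℝ (⊤ : ℕ∞) u Ω)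
    (hpsh : ∀ z ∈ Ω, (hessA u z).PosDef)
    (hKE : ∀ z ∈ Ω, (hessA u z).det = (Real.exp ((n + 1) * u z) : ℂ)) :
    ∀ z ∈ Ω,
      ∑ i, ∑ j, uInv u z i j • mwdz (mwdzbar (hessB u) j) i z
        = (∑ i, ∑ j, uInv u z i j •
            (mwdz (hessA u) i z * (hessA u z)⁻¹ * mwdzbar (hessB u) j z))
          + ((n : ℂ) + 1) • hessB u z := by
  intro z hz
  ext p q
  rw [Matrix.add_apply]
  have hL : (∑ i, ∑ j, uInv u z i j • mwdz (mwdzbar (hessB u) j) i z) p q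
      = ∑ i, ∑ j, (hessA u z)⁻¹ j i
          * wdz (wdz (fun w' => hessA u w' i j) q) p z := by
    rw [Matrix.sum_apply]
    refine Finset.sum_congr rfl fun i _ => ?_
    rw [Matrix.sum_apply]
    refine Finset.sum_congr rfl fun j _ => ?_
    rw [Matrix.smul_apply, smul_eq_mul, CY.lhs_entry hΩ hu i j hz p q]
    rfl
  have hB : (((n : ℂ) + 1) • hessB u z) p q
      = ((n : ℂ) + 1) * wdz (wdz (cplx u) q) p z := by
    rw [Matrix.smul_apply, smul_eq_mul]
    rfl
  have hR1 : (∑ i, ∑ j, uInv u z i j •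
        (mwdz (hessA u) i z * (hessA u z)⁻¹ * mwdzbar (hessB u) j z)) p q
      = ∑ i, ∑ j, ∑ c, ∑ k, (hessA u z)⁻¹ j i * wdz (fun w => hessA u w i k) p z
          * (hessA u z)⁻¹ k c * wdz (fun w => hessA u w c j) q z := by
    rw [Matrix.sum_apply]
    refine Finset.sum_congr rfl fun i _ => ?_
    rw [Matrix.sum_apply]
    refine Finset.sum_congr rfl fun j _ => ?_
    rw [Matrix.smul_apply, smul_eq_mul]
    have hprod : (mwdz (hessA u) i z * (hessA u z)⁻¹ * mwdzbar (hessB u) j z) p q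
        = ∑ c, ∑ k, wdz (fun w => hessA u w i k) p z * (hessA u z)⁻¹ k c
            * wdz (fun w => hessA u w c j) q z := by
      calc (mwdz (hessA u) i z * (hessA u z)⁻¹ * mwdzbar (hessB u) j z) p q
          = ∑ c, (mwdz (hessA u) i z * (hessA u z)⁻¹) p c
              * (mwdzbar (hessB u) j z) c q := Matrix.mul_apply
        _ = ∑ c, ∑ k, (mwdz (hessA u) i z) p k * (hessA u z)⁻¹ k c
              * (mwdzbar (hessB u) j z) c q := by
            refine Finset.sum_congr rfl fun c _ => ?_
            rw [Matrix.mul_apply, Finset.sum_mul]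
        _ = ∑ c, ∑ k, wdz (fun w => hessA u w i k) p z * (hessA u z)⁻¹ k c
              * wdz (fun w => hessA u w c j) q z := by
            refine Finset.sum_congr rfl fun c _ => Finset.sum_congr rfl fun k _ => ?_
            rw [CY.mwdzA_entry hΩ hu i hz p k, CY.mwdzbarB_entry hΩ hu j hz c q]
    rw [hprod]
    show (hessA u z)⁻¹ j i * _ = _
    rw [Finset.mul_sum]
    refine Finset.sum_congr rfl fun c _ => ?_
    rw [Finset.mul_sum]
    refine Finset.sum_congr rfl fun k _ => ?_
    ring
  rw [hL, hR1, hB, CY.second_order hΩ hu hKE p q hz]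
  congr 1
  exact (CY.sum4_perm (fun i j k l => (hessA u z)⁻¹ j k * wdz (fun w => hessA u w k l) p z
    * (hessA u z)⁻¹ l i * wdz (fun w => hessA u w i j) q z)).symm


end
end
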